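/- arXiv:2506.19810 — 3 statements merged into one kernel-verified Lean document; each statement's English description precedes it below -/
import Mathlib

section
/- The minimax mistake bound for deterministic ambiguous online learning equals the depth-bounded ambiguous Littlestone dimension: for all N, M*_H(N) = AL(H, N). -/
/-- A finite rooted tree: vertices, a root, and a parent map under which every
vertex reaches the root. -/
structure RTree where
  V : Type
  [fin : Fintype V]
  root : V
  parent : V → V
  parent_root : parent root = root
  reaches : ∀ v : V, ∃ k : ℕ, parent^[k] v = root

namespace RTree

/-- Children of a vertex (the root is not a child of anything). -/
def children (t : RTree) (v : t.V) : Set t.V := {w | t.parent w = v ∧ w ≠ t.root}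

def IsLeaf (t : RTree) (v : t.V) : Prop := t.children v = ∅

/-- `a` is an ancestor (or equal to) `u`. -/
def Anc (t : RTree) (a u : t.V) : Prop := ∃ k : ℕ, t.parent^[k] u = a

noncomputable def depthOf (t : RTree) (v : t.V) : ℕ := sInf {k : ℕ | t.parent^[k] v = t.root}

noncomputable def depth (t : RTree) : ℕ := sSup {n : ℕ | ∃ v : t.V, n = t.depthOf v}

end RTree

/-- An ambiguous shattered `H`-tree: internal vertices carry instances, non-root
vertices (identified with the edges to their parents) carry labels, distinct among
siblings, leaves carry hypotheses from `H` compatible with all edge labels above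
them, and `E0` selects exactly one child edge of each internal vertex. -/
structure AmbTree (X Y : Type) (H : Set (X → Set Y)) where
  t : RTree
  xlab : t.V → X
  ylab : t.V → Y
  hlab : t.V → (X → Set Y)
  E0 : Set t.V
  e0_ne_root : ∀ a ∈ E0, a ≠ t.root
  e0_unique : ∀ v : t.V, (t.children v).Nonempty → ∃! a : t.V, a ∈ t.children v ∩ E0
  sib_distinct : ∀ a b : t.V, a ≠ t.root → b ≠ t.root →
    t.parent a = t.parent b → a ≠ b → ylab a ≠ ylab b
  hlab_mem : ∀ u : t.V, t.IsLeaf u → hlab u ∈ H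
  path_mem : ∀ u a : t.V, t.IsLeaf u → t.Anc a u → a ≠ t.root →
    ylab a ∈ hlab u (xlab (t.parent a))

namespace AmbTree

variable {X Y : Type} {H : Set (X → Set Y)}

/-- Edge `a` (on the root-to-`u` path) is relevant to leaf `u`. -/
def Relevant (T : AmbTree X Y H) (a u : T.t.V) : Prop :=
  a ≠ T.t.root ∧ T.t.Anc a u ∧
    (a ∉ T.E0 ∨ ∃ b : T.t.V, T.t.parent b = T.t.parent a ∧ b ≠ T.t.root ∧
      T.ylab b ∉ T.hlab u (T.xlab (T.t.parent a)))

noncomputable def relCount (T : AmbTree X Y H) (u : T.t.V) : ℕ :=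
  {a : T.t.V | T.Relevant a u}.ncard

/-- Rank: the minimum over leaves of the number of relevant edges. -/
noncomputable def rank (T : AmbTree X Y H) : ℕ :=
  sInf {n : ℕ | ∃ u : T.t.V, T.t.IsLeaf u ∧ n = T.relCount u}

noncomputable def depth (T : AmbTree X Y H) : ℕ := T.t.depth

end AmbTree

/-- `AL(H, N)`: the maximal rank of an ambiguous shattered `H`-tree of depth at most `N`. -/
noncomputable def ALn (X Y : Type) (H : Set (X → Set Y)) (N : ℕ) : ℕ :=
  sSup {r : ℕ | ∃ T : AmbTree X Y H, T.depth ≤ N ∧ r = T.rank}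

/-- A trace is compatible with `h` when every observed label is allowed by `h`. -/
def Compatible {X Y : Type} (h : X → Set Y) (xs : List (X × Y)) : Prop :=
  ∀ p ∈ xs, p.2 ∈ h p.1

/-- Number of mistakes (overconfidence or underconfidence) of learner `A` on a
trace, relative to hypothesis `h`. -/
noncomputable def numMistakes {X Y : Type} (A : List (X × Y) → X → Set Y)
    (h : X → Set Y) (xs : List (X × Y)) : ℕ :=
  {k : ℕ | ∃ hk : k < xs.length,
    (xs.get ⟨k, hk⟩).2 ∉ A (xs.take k) (xs.get ⟨k, hk⟩).1 ∨
      ¬ A (xs.take k) (xs.get ⟨k, hk⟩).1 ⊆ h (xs.get ⟨k, hk⟩).1}.ncard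

/-- The minimax mistake bound for deterministic learners over traces of length `N`. -/
noncomputable def Mstar {X Y : Type} (H : Set (X → Set Y)) (N : ℕ) : ℕ :=
  sInf {m : ℕ | ∃ A : List (X × Y) → X → Set Y, ∀ h ∈ H, ∀ xs : List (X × Y),
    Compatible h xs → xs.length = N → numMistakes A h xs ≤ m}

open scoped Classical

attribute [instance] RTree.fin

namespace RTree

variable (t : RTree)

lemma depthSet_nonempty (v : t.V) : {k : ℕ | t.parent^[k] v = t.root}.Nonempty :=
  t.reaches v

lemma iterate_depthOf (v : t.V) : t.parent^[t.depthOf v] v = t.root :=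
  Nat.sInf_mem (t.depthSet_nonempty v)

@[simp] lemma depthOf_root : t.depthOf t.root = 0 :=
  Nat.sInf_eq_zero.2 (Or.inl rfl)

lemma depthOf_eq_zero_iff {v : t.V} : t.depthOf v = 0 ↔ v = t.root := by
  constructor
  · intro h
    have := t.iterate_depthOf v
    rwa [h] at this
  · rintro rfl; exact t.depthOf_root

lemma depthOf_parent {v : t.V} (hv : v ≠ t.root) :
    t.depthOf v = t.depthOf (t.parent v) + 1 := by
  have h1 : t.depthOf v ≠ 0 := fun h => hv (t.depthOf_eq_zero_iff.1 h)
  apply le_antisymm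
  · have : t.parent^[t.depthOf (t.parent v) + 1] v = t.root := by
      rw [Function.iterate_succ_apply]
      exact t.iterate_depthOf (t.parent v)
    exact Nat.sInf_le this
  · have h2 : t.parent^[t.depthOf v] v = t.root := t.iterate_depthOf v
    obtain ⟨d, hd⟩ : ∃ d, t.depthOf v = d + 1 := ⟨t.depthOf v - 1, (Nat.succ_pred_eq_of_ne_zero h1).symm⟩
    rw [hd] at h2 ⊢
    rw [Function.iterate_succ_apply] at h2
    exact Nat.succ_le_succ (Nat.sInf_le h2)

lemma iterate_parent_root (k : ℕ) : t.parent^[k] t.root = t.root :=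
  Function.iterate_fixed t.parent_root k

lemma depthOf_iterate {v : t.V} {k : ℕ} (hk : k ≤ t.depthOf v) :
    t.depthOf (t.parent^[k] v) = t.depthOf v - k := by
  induction k with
  | zero => simp
  | succ k ih =>
    have hk' : k ≤ t.depthOf v := Nat.le_of_succ_le hk
    have ihk := ih hk'
    have hne : t.parent^[k] v ≠ t.root := by
      intro h
      have : t.depthOf v - k = 0 := by rw [← ihk, h, t.depthOf_root]
      omega
    rw [Function.iterate_succ_apply']
    have := t.depthOf_parent hne
    omega

lemma anc_root (u : t.V) : t.Anc t.root u := t.reaches u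

lemma anc_refl (u : t.V) : t.Anc u u := ⟨0, rfl⟩

lemma anc_trans {a b c : t.V} (h1 : t.Anc a b) (h2 : t.Anc b c) : t.Anc a c := by
  obtain ⟨k, hk⟩ := h1; obtain ⟨l, hl⟩ := h2
  exact ⟨k + l, by rw [Function.iterate_add_apply, hl, hk]⟩

lemma anc_iterate_eq {a u : t.V} (h : t.Anc a u) :
    t.parent^[t.depthOf u - t.depthOf a] u = a := by
  obtain ⟨k, hk⟩ := h
  by_cases hle : k ≤ t.depthOf u
  · have := t.depthOf_iterate hle
    rw [hk] at this
    have : k = t.depthOf u - t.depthOf a := by omega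
    rwa [← this]
  · -- then parent^[k] u = root
    have hroot : t.parent^[k] u = t.root := by
      have h1 : t.parent^[t.depthOf u] u = t.root := t.iterate_depthOf u
      have : k = (k - t.depthOf u) + t.depthOf u := by omega
      rw [this, Function.iterate_add_apply, h1, t.iterate_parent_root]
    rw [hroot] at hk
    subst hk
    simp [t.iterate_depthOf u]

lemma anc_depth_le {a u : t.V} (h : t.Anc a u) : t.depthOf a ≤ t.depthOf u := by
  have := t.anc_iterate_eq h
  by_contra hlt
  push_neg at hlt
  have h0 : t.depthOf u - t.depthOf a = 0 := by omega
  rw [h0] at this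
  simp at this
  subst this
  omega

lemma anc_antisymm {a b : t.V} (h1 : t.Anc a b) (h2 : t.Anc b a) : a = b := by
  have e1 := t.anc_depth_le h1
  have e2 := t.anc_depth_le h2
  have : t.depthOf a = t.depthOf b := le_antisymm e1 e2
  have := t.anc_iterate_eq h1
  rw [show t.depthOf b - t.depthOf a = 0 by omega] at this
  simpa using this.symm

lemma anc_chain {a b u : t.V} (ha : t.Anc a u) (hb : t.Anc b u)
    (hd : t.depthOf a ≤ t.depthOf b) : t.Anc a b := by
  have e1 := t.anc_iterate_eq ha
  have e2 := t.anc_iterate_eq hb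
  have hbu := t.anc_depth_le hb
  have hau := t.anc_depth_le ha
  refine ⟨t.depthOf b - t.depthOf a, ?_⟩
  calc t.parent^[t.depthOf b - t.depthOf a] b
      = t.parent^[t.depthOf b - t.depthOf a] (t.parent^[t.depthOf u - t.depthOf b] u) := by
        rw [e2]
    _ = t.parent^[(t.depthOf b - t.depthOf a) + (t.depthOf u - t.depthOf b)] u :=
        (Function.iterate_add_apply _ _ _ _).symm
    _ = t.parent^[t.depthOf u - t.depthOf a] u := by
        congr 1
        omega
    _ = a := e1

lemma anc_child {v : t.V} {a : t.V} (ha : a ∈ t.children v) : t.Anc v a :=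
  ⟨1, ha.1⟩

lemma depthOf_child {v a : t.V} (ha : a ∈ t.children v) :
    t.depthOf a = t.depthOf v + 1 := by
  rw [t.depthOf_parent ha.2, ha.1]

lemma not_isLeaf_iff {v : t.V} : ¬ t.IsLeaf v ↔ (t.children v).Nonempty := by
  rw [IsLeaf, Set.nonempty_iff_ne_empty]

lemma anc_step {v u : t.V} (h : t.Anc v u) (hne : v ≠ u) :
    ∃ a ∈ t.children v, t.Anc a u := by
  classical
  obtain ⟨k, hk⟩ := h
  -- take minimal k
  have hset : ∃ k, t.parent^[k] u = v := ⟨k, hk⟩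
  have hKmem : t.parent^[sInf {k | t.parent^[k] u = v}] u = v := Nat.sInf_mem hset
  have hKpos : sInf {k | t.parent^[k] u = v} ≠ 0 := by
    intro h0
    rw [h0] at hKmem
    exact hne hKmem.symm
  obtain ⟨K', hK'⟩ := Nat.exists_eq_succ_of_ne_zero hKpos
  rw [hK'] at hKmem
  rw [Function.iterate_succ_apply'] at hKmem
  refine ⟨t.parent^[K'] u, ⟨?_, ?_⟩, ⟨K', rfl⟩⟩
  · exact hKmem
  · intro hroot
    have hvroot : v = t.root := by
      rw [← hKmem, hroot, t.parent_root]
    have hmem : K' ∈ {k | t.parent^[k] u = v} := by rw [Set.mem_setOf_eq, hroot, hvroot]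
    have hle := Nat.sInf_le hmem
    rw [hK'] at hle
    omega

lemma exists_leaf (v : t.V) : ∃ u : t.V, t.Anc v u ∧ t.IsLeaf u := by
  classical
  have hns : (Finset.univ.filter (fun w => t.Anc v w)).Nonempty :=
    ⟨v, by simp [t.anc_refl v]⟩
  obtain ⟨u, hu, hmax⟩ := Finset.exists_max_image
    (Finset.univ.filter (fun w => t.Anc v w)) t.depthOf hns
  simp only [Finset.mem_filter, Finset.mem_univ, true_and] at hu hmax
  refine ⟨u, hu, ?_⟩
  by_contra hl
  obtain ⟨a, ha⟩ := t.not_isLeaf_iff.1 hl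
  have hanc : t.Anc v a := t.anc_trans hu (t.anc_child ha)
  have := hmax a (by simpa using hanc)
  have := t.depthOf_child ha
  omega

lemma depthOf_le_depth (v : t.V) : t.depthOf v ≤ t.depth := by
  apply le_csSup
  · have : {n : ℕ | ∃ v : t.V, n = t.depthOf v} = Set.range t.depthOf := by
      ext n; simp [eq_comm]
    rw [this]
    exact (Set.finite_range t.depthOf).bddAbove
  · exact ⟨v, rfl⟩

lemma depth_le {n : ℕ} (h : ∀ v : t.V, t.depthOf v ≤ n) : t.depth ≤ n := by
  have hne : {n : ℕ | ∃ v : t.V, n = t.depthOf v}.Nonempty := ⟨0, t.root, t.depthOf_root.symm⟩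
  apply csSup_le hne
  rintro m ⟨v, rfl⟩
  exact h v

end RTree
section Mistakes

variable {X Y : Type}

/-- Mistakes of learner `A` against `h` on suffix `suf`, after history `pre`. -/
noncomputable def mistakesFrom (A : List (X × Y) → X → Set Y) (h : X → Set Y) :
    List (X × Y) → List (X × Y) → ℕ
  | _, [] => 0
  | pre, p :: rest =>
      (if p.2 ∉ A pre p.1 ∨ ¬ A pre p.1 ⊆ h p.1 then 1 else 0) +
        mistakesFrom A h (pre ++ [p]) rest

@[simp] lemma mistakesFrom_nil (A : List (X × Y) → X → Set Y) (h : X → Set Y)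
    (pre : List (X × Y)) : mistakesFrom A h pre [] = 0 := rfl

lemma mistakesFrom_cons (A : List (X × Y) → X → Set Y) (h : X → Set Y)
    (pre : List (X × Y)) (p : X × Y) (rest : List (X × Y)) :
    mistakesFrom A h pre (p :: rest) =
      (if p.2 ∉ A pre p.1 ∨ ¬ A pre p.1 ⊆ h p.1 then 1 else 0) +
        mistakesFrom A h (pre ++ [p]) rest := by
  simp [mistakesFrom]

lemma mistakesFrom_append (A : List (X × Y) → X → Set Y) (h : X → Set Y) :
    ∀ (l1 l2 pre : List (X × Y)),
      mistakesFrom A h pre (l1 ++ l2) =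
        mistakesFrom A h pre l1 + mistakesFrom A h (pre ++ l1) l2 := by
  intro l1
  induction l1 with
  | nil => intro l2 pre; simp
  | cons p rest ih =>
    intro l2 pre
    rw [List.cons_append, mistakesFrom_cons, mistakesFrom_cons, ih]
    simp [List.append_assoc]
    omega

/-- The set of mistake rounds on suffix `suf` given history `pre`. -/
def misSet (A : List (X × Y) → X → Set Y) (h : X → Set Y)
    (pre suf : List (X × Y)) : Set ℕ :=
  {k : ℕ | ∃ hk : k < suf.length,
    (suf.get ⟨k, hk⟩).2 ∉ A (pre ++ suf.take k) (suf.get ⟨k, hk⟩).1 ∨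
      ¬ A (pre ++ suf.take k) (suf.get ⟨k, hk⟩).1 ⊆ h (suf.get ⟨k, hk⟩).1}

lemma misSet_nil (A : List (X × Y) → X → Set Y) (h : X → Set Y) (pre : List (X × Y)) :
    misSet A h pre [] = ∅ := by
  ext k; simp [misSet]

lemma misSet_subset (A : List (X × Y) → X → Set Y) (h : X → Set Y)
    (pre suf : List (X × Y)) : misSet A h pre suf ⊆ Set.Iio suf.length := by
  rintro k ⟨hk, -⟩; exact hk

lemma misSet_finite (A : List (X × Y) → X → Set Y) (h : X → Set Y)
    (pre suf : List (X × Y)) : (misSet A h pre suf).Finite :=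
  Set.Finite.subset (Set.finite_Iio _) (misSet_subset A h pre suf)

lemma misSet_cons (A : List (X × Y) → X → Set Y) (h : X → Set Y)
    (pre : List (X × Y)) (p : X × Y) (rest : List (X × Y)) :
    misSet A h pre (p :: rest) =
      (if p.2 ∉ A pre p.1 ∨ ¬ A pre p.1 ⊆ h p.1 then ({0} : Set ℕ) else ∅) ∪
        Nat.succ '' misSet A h (pre ++ [p]) rest := by
  ext k
  cases k with
  | zero =>
    simp only [misSet, Set.mem_setOf_eq, Set.mem_union, Set.mem_image]
    constructor
    · rintro ⟨hk, hP⟩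
      left
      simp only [List.get] at hP
      simp only [List.take_zero, List.append_nil] at hP
      rw [if_pos hP]
      rfl
    · rintro (h0 | ⟨k', _, hk'⟩)
      · by_cases hc : p.2 ∉ A pre p.1 ∨ ¬ A pre p.1 ⊆ h p.1
        · refine ⟨Nat.succ_pos _, ?_⟩
          simpa using hc
        · rw [if_neg hc] at h0; exact absurd h0 (Set.notMem_empty 0)
      · exact absurd hk' (Nat.succ_ne_zero k')
  | succ k =>
    simp only [misSet, Set.mem_setOf_eq, Set.mem_union, Set.mem_image]
    constructor
    · rintro ⟨hk, hP⟩
      right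
      refine ⟨k, ⟨Nat.lt_of_succ_lt_succ (by simpa using hk), ?_⟩, rfl⟩
      rw [List.get_cons_succ, List.take_succ_cons, List.append_cons] at hP
      exact hP
    · rintro (h0 | ⟨k', ⟨hk', hP⟩, hkk⟩)
      · split_ifs at h0
        · exact absurd h0 (Nat.succ_ne_zero k)
        · exact absurd h0 (Set.notMem_empty _)
      · cases hkk
        refine ⟨Nat.succ_lt_succ (by simpa using hk'), ?_⟩
        rw [List.get_cons_succ, List.take_succ_cons, List.append_cons]
        exact hP

lemma mistakesFrom_eq_ncard (A : List (X × Y) → X → Set Y) (h : X → Set Y) :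
    ∀ (suf pre : List (X × Y)),
      mistakesFrom A h pre suf = (misSet A h pre suf).ncard := by
  intro suf
  induction suf with
  | nil => intro pre; simp [misSet_nil]
  | cons p rest ih =>
    intro pre
    rw [mistakesFrom_cons, misSet_cons, ih]
    have hdisj : Disjoint (if p.2 ∉ A pre p.1 ∨ ¬ A pre p.1 ⊆ h p.1 then ({0} : Set ℕ) else ∅)
        (Nat.succ '' misSet A h (pre ++ [p]) rest) := by
      split_ifs
      · rw [Set.disjoint_singleton_left]
        rintro ⟨k, -, hk⟩
        exact Nat.succ_ne_zero k hk
      · exact Set.empty_disjoint _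
    rw [Set.ncard_union_eq hdisj (by split_ifs <;> simp)
      ((misSet_finite A h _ _).image _)]
    rw [Set.ncard_image_of_injective _ Nat.succ_injective]
    split_ifs <;> simp

lemma numMistakes_eq_mistakesFrom (A : List (X × Y) → X → Set Y) (h : X → Set Y)
    (xs : List (X × Y)) : numMistakes A h xs = mistakesFrom A h [] xs := by
  rw [mistakesFrom_eq_ncard]
  unfold numMistakes misSet
  simp

end Mistakes
section Part1

variable {X Y : Type} {H : Set (X → Set Y)}

namespace AmbTree

/-- Relevant edges strictly below `v` on the path to `u`. -/
def RelBelow (T : AmbTree X Y H) (v u : T.t.V) : Set T.t.V :=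
  {b | T.Relevant b u ∧ T.t.Anc v b ∧ b ≠ v}

lemma relBelow_root (T : AmbTree X Y H) (u : T.t.V) :
    T.RelBelow T.t.root u = {a | T.Relevant a u} := by
  ext b
  simp only [RelBelow, Set.mem_setOf_eq, and_iff_left_iff_imp]
  intro hrel
  exact ⟨T.t.anc_root b, hrel.1⟩

lemma relBelow_self (T : AmbTree X Y H) (u : T.t.V) : T.RelBelow u u = ∅ := by
  ext b
  simp only [RelBelow, Set.mem_setOf_eq, Set.mem_empty_iff_false, iff_false, not_and]
  intro hrel hanc hne
  exact hne (T.t.anc_antisymm hanc hrel.2.1).symm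

lemma relBelow_step (T : AmbTree X Y H) {v a u : T.t.V}
    (ha : a ∈ T.t.children v) (hanc : T.t.Anc a u) :
    T.RelBelow v u = T.RelBelow a u ∪ (if T.Relevant a u then {a} else ∅) := by
  have hav : T.t.Anc v a := T.t.anc_child ha
  have hda : T.t.depthOf a = T.t.depthOf v + 1 := T.t.depthOf_child ha
  have hane : a ≠ v := by
    intro hh; rw [hh] at hda; omega
  ext b
  simp only [RelBelow, Set.mem_setOf_eq, Set.mem_union]
  constructor
  · rintro ⟨hrel, hvb, hbv⟩
    have hbu : T.t.Anc b u := hrel.2.1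
    by_cases hcmp : T.t.depthOf a ≤ T.t.depthOf b
    · have hab : T.t.Anc a b := T.t.anc_chain hanc hbu hcmp
      by_cases hba : b = a
      · right; rw [if_pos (hba ▸ hrel)]; exact hba
      · left; exact ⟨hrel, hab, hba⟩
    · push_neg at hcmp
      exfalso
      have hba : T.t.Anc b a := T.t.anc_chain hbu hanc (le_of_lt hcmp)
      obtain ⟨k, hk⟩ := hba
      cases k with
      | zero =>
        simp only [Function.iterate_zero, id_eq] at hk
        rw [← hk] at hcmp; omega
      | succ k =>
        have hbanc : T.t.Anc b v := by
          refine ⟨k, ?_⟩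
          rw [Function.iterate_succ_apply, ha.1] at hk
          exact hk
        exact hbv (T.t.anc_antisymm hbanc hvb)
  · rintro (⟨hrel, hab, hba⟩ | hin)
    · refine ⟨hrel, T.t.anc_trans hav hab, ?_⟩
      intro hbv
      rw [hbv] at hab
      have := T.t.anc_antisymm hav hab
      exact hane this.symm
    · by_cases hR : T.Relevant a u
      · rw [if_pos hR] at hin
        rw [Set.mem_singleton_iff] at hin
        subst hin
        exact ⟨hR, hav, hane⟩
      · rw [if_neg hR] at hin
        exact absurd hin (Set.notMem_empty b)

variable [Fintype Y]

/-- The adversary's choice of child at an internal vertex. -/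
noncomputable def pick (T : AmbTree X Y H) (A : List (X × Y) → X → Set Y)
    (v : T.t.V) (pre : List (X × Y)) (hcn : (T.t.children v).Nonempty) : T.t.V :=
  if h2 : ∃ a, a ∈ T.t.children v ∧ a ∉ T.E0 ∧ T.ylab a ∉ A pre (T.xlab v)
  then h2.choose else (T.e0_unique v hcn).exists.choose

lemma pick_spec (T : AmbTree X Y H) (A : List (X × Y) → X → Set Y)
    (v : T.t.V) (pre : List (X × Y)) (hcn : (T.t.children v).Nonempty) :
    T.pick A v pre hcn ∈ T.t.children v ∧
      (∀ u : T.t.V, T.t.IsLeaf u → T.t.Anc (T.pick A v pre hcn) u →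
        T.Relevant (T.pick A v pre hcn) u →
        (T.ylab (T.pick A v pre hcn) ∉ A pre (T.xlab v) ∨
          ¬ A pre (T.xlab v) ⊆ T.hlab u (T.xlab v))) := by
  unfold pick
  split_ifs with h2
  · exact ⟨h2.choose_spec.1, fun u _ _ _ => Or.inl h2.choose_spec.2.2⟩
  · have haspec := (T.e0_unique v hcn).exists.choose_spec
    have hachild := haspec.1
    have haE0 := haspec.2
    refine ⟨hachild, ?_⟩
    intro u hleaf hanc hrel
    rcases hrel.2.2 with hnE0 | ⟨b, hpb, hbroot, hby⟩
    · exact absurd haE0 hnE0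
    · have hpa : T.t.parent (T.e0_unique v hcn).exists.choose = v := hachild.1
      have hbchild : b ∈ T.t.children v := ⟨by rw [hpb, hpa], hbroot⟩
      have hbE0 : b ∉ T.E0 := by
        intro hbE0
        have huniq : b = (T.e0_unique v hcn).exists.choose :=
          (T.e0_unique v hcn).unique ⟨hbchild, hbE0⟩ ⟨hachild, haE0⟩
        have hmem := T.path_mem u _ hleaf hanc hachild.2
        rw [huniq] at hby
        exact hby hmem
      push_neg at h2
      have hbS : T.ylab b ∈ A pre (T.xlab v) := h2 b hbchild hbE0
      right
      intro hsub
      have hmem2 := hsub hbS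
      rw [hpa] at hby
      exact hby hmem2

/-- The adversary's walk down the tree against learner `A`. -/
noncomputable def walk (T : AmbTree X Y H) (A : List (X × Y) → X → Set Y) :
    ℕ → T.t.V → List (X × Y) → T.t.V × List (X × Y)
  | 0, v, _ => (v, [])
  | (fuel+1), v, pre =>
    if hcn : (T.t.children v).Nonempty then
      let a := T.pick A v pre hcn
      let r := walk T A fuel a (pre ++ [(T.xlab v, T.ylab a)])
      (r.1, (T.xlab v, T.ylab a) :: r.2)
    else (v, [])

lemma walk_spec (T : AmbTree X Y H) (A : List (X × Y) → X → Set Y) :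
    ∀ (fuel : ℕ) (v : T.t.V) (pre : List (X × Y)),
      T.t.Anc v (T.walk A fuel v pre).1 ∧
      (T.t.IsLeaf (T.walk A fuel v pre).1 ∨
        T.t.depthOf (T.walk A fuel v pre).1 = T.t.depthOf v + fuel) ∧
      T.t.depthOf v + (T.walk A fuel v pre).2.length = T.t.depthOf (T.walk A fuel v pre).1 ∧
      (T.t.IsLeaf (T.walk A fuel v pre).1 →
        Compatible (T.hlab (T.walk A fuel v pre).1) (T.walk A fuel v pre).2) ∧
      (T.t.IsLeaf (T.walk A fuel v pre).1 →
        (T.RelBelow v (T.walk A fuel v pre).1).ncard ≤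
          mistakesFrom A (T.hlab (T.walk A fuel v pre).1) pre (T.walk A fuel v pre).2) := by
  intro fuel
  induction fuel with
  | zero =>
    intro v pre
    simp only [walk]
    refine ⟨T.t.anc_refl v, Or.inr (by omega), by simp, ?_, ?_⟩
    · intro _ p hp; simp at hp
    · intro _
      rw [T.relBelow_self]
      simp
  | succ fuel ih =>
    intro v pre
    by_cases hcn : (T.t.children v).Nonempty
    · have hps := T.pick_spec A v pre hcn
      set a := T.pick A v pre hcn with hadef
      have hwalk : T.walk A (fuel+1) v pre =
          ((T.walk A fuel a (pre ++ [(T.xlab v, T.ylab a)])).1,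
            (T.xlab v, T.ylab a) :: (T.walk A fuel a (pre ++ [(T.xlab v, T.ylab a)])).2) := by
        rw [walk, dif_pos hcn]
      obtain ⟨ih1, ih2, ih3, ih4, ih5⟩ := ih a (pre ++ [(T.xlab v, T.ylab a)])
      rw [hwalk]
      dsimp only
      have hmem := hps.1
      have hda : T.t.depthOf a = T.t.depthOf v + 1 := T.t.depthOf_child hmem
      have haroot : a ≠ T.t.root := hmem.2
      refine ⟨T.t.anc_trans (T.t.anc_child hmem) ih1, ?_, ?_, ?_, ?_⟩
      · rcases ih2 with hl | hd
        · exact Or.inl hl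
        · exact Or.inr (by omega)
      · simp only [List.length_cons]
        omega
      · intro hleaf
        intro p hp
        rcases List.mem_cons.1 hp with hp0 | hp1
        · subst hp0
          have hpm := T.path_mem _ a hleaf ih1 haroot
          rw [hmem.1] at hpm
          exact hpm
        · exact ih4 hleaf p hp1
      · intro hleaf
        rw [T.relBelow_step hmem ih1, mistakesFrom_cons]
        have hfin : (T.RelBelow a (T.walk A fuel a (pre ++ [(T.xlab v, T.ylab a)])).1).Finite :=
          Set.toFinite _
        have hnotm : a ∉ T.RelBelow a (T.walk A fuel a (pre ++ [(T.xlab v, T.ylab a)])).1 := by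
          intro hmem'
          exact hmem'.2.2 rfl
        by_cases hR : T.Relevant a (T.walk A fuel a (pre ++ [(T.xlab v, T.ylab a)])).1
        · rw [if_pos hR]
          have hcount : (T.RelBelow a (T.walk A fuel a (pre ++ [(T.xlab v, T.ylab a)])).1 ∪ {a}).ncard
              = (T.RelBelow a (T.walk A fuel a (pre ++ [(T.xlab v, T.ylab a)])).1).ncard + 1 := by
            rw [Set.union_singleton, Set.ncard_insert_of_notMem hnotm hfin]
          rw [hcount]
          have hmis := hps.2 _ hleaf ih1 hR
          rw [if_pos hmis]
          have hle := ih5 hleaf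
          omega
        · rw [if_neg hR]
          rw [Set.union_empty]
          have hle := ih5 hleaf
          split_ifs <;> omega
    · have hwalk : T.walk A (fuel+1) v pre = (v, []) := by
        rw [walk, dif_neg hcn]
      rw [hwalk]
      refine ⟨T.t.anc_refl v, Or.inl (Set.not_nonempty_iff_eq_empty.1 hcn), by simp, ?_, ?_⟩
      · intro _ p hp; simp at hp
      · intro _
        rw [T.relBelow_self]
        simp

end AmbTree

/-- Part 1: any learner guarantee dominates the rank of every shallow tree. -/
lemma part1 {X Y : Type} [Fintype Y] {H : Set (X → Set Y)} {N m : ℕ}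
    (hval : ∀ h ∈ H, ∃ x : X, (h x).Nonempty)
    (A : List (X × Y) → X → Set Y)
    (hA : ∀ h ∈ H, ∀ xs : List (X × Y), Compatible h xs → xs.length = N →
      numMistakes A h xs ≤ m)
    (T : AmbTree X Y H) (hd : T.depth ≤ N) : T.rank ≤ m := by
  obtain ⟨w1, w2, w3, w4, w5⟩ := T.walk_spec A (T.t.depth + 1) T.t.root []
  set u := (T.walk A (T.t.depth + 1) T.t.root []).1 with hudef
  set tail := (T.walk A (T.t.depth + 1) T.t.root []).2 with htaildef
  have hdu : T.t.depthOf u ≤ T.t.depth := T.t.depthOf_le_depth u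
  have hleaf : T.t.IsLeaf u := by
    rcases w2 with hl | he
    · exact hl
    · rw [T.t.depthOf_root] at he; omega
  rw [T.t.depthOf_root] at w3
  have hlen : tail.length ≤ N := by
    have : (T.depth : ℕ) ≤ N := hd
    unfold AmbTree.depth at this
    omega
  have hH : T.hlab u ∈ H := T.hlab_mem u hleaf
  obtain ⟨x₀, y₀, hy₀⟩ := hval (T.hlab u) hH
  set xs := tail ++ List.replicate (N - tail.length) (x₀, y₀) with hxsdef
  have hcomp : Compatible (T.hlab u) xs := by
    intro p hp
    rcases List.mem_append.1 hp with hp1 | hp2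
    · exact w4 hleaf p hp1
    · rw [List.eq_of_mem_replicate hp2]
      exact hy₀
  have hlenxs : xs.length = N := by
    rw [hxsdef, List.length_append, List.length_replicate]
    omega
  have hbound := hA (T.hlab u) hH xs hcomp hlenxs
  rw [numMistakes_eq_mistakesFrom, hxsdef, mistakesFrom_append] at hbound
  have hge := w5 hleaf
  rw [T.relBelow_root] at hge
  have hrank : T.rank ≤ T.relCount u := Nat.sInf_le ⟨u, hleaf, rfl⟩
  unfold AmbTree.relCount at hrank
  simp only [List.nil_append] at hbound
  omega

end Part1
section Potential

variable {X Y : Type} [Fintype Y] {H : Set (X → Set Y)}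

/-- Penalty of hypothesis `g` against a list of pending (instance, prediction) pairs. -/
noncomputable def pend (g : X → Set Y) (C : List (X × Set Y)) : ℕ :=
  (C.map (fun c => if c.2 ⊆ g c.1 then 0 else 1)).sum

@[simp] lemma pend_nil (g : X → Set Y) : pend g [] = 0 := rfl

lemma pend_concat (g : X → Set Y) (C : List (X × Set Y)) (c : X × Set Y) :
    pend g (C ++ [c]) = pend g C + (if c.2 ⊆ g c.1 then 0 else 1) := by
  simp [pend]

lemma pend_concat_le (g : X → Set Y) (C : List (X × Set Y)) (c : X × Set Y) :
    pend g (C ++ [c]) ≤ pend g C + 1 := by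
  rw [pend_concat]
  split_ifs <;> omega

lemma pend_le_length (g : X → Set Y) (C : List (X × Set Y)) :
    pend g C ≤ C.length := by
  induction C with
  | nil => simp
  | cons c C ih =>
    simp only [pend, List.map_cons, List.sum_cons, List.length_cons]
    simp only [pend] at ih
    split_ifs <;> omega

namespace AmbTree

/-- Value of a tree: minimum over leaves of relevant edges plus pending penalty. -/
noncomputable def val (T : AmbTree X Y H) (C : List (X × Set Y)) : ℕ :=
  sInf {n : ℕ | ∃ u : T.t.V, T.t.IsLeaf u ∧ n = T.relCount u + pend (T.hlab u) C}

lemma valSet_nonempty (T : AmbTree X Y H) (C : List (X × Set Y)) :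
    {n : ℕ | ∃ u : T.t.V, T.t.IsLeaf u ∧ n = T.relCount u + pend (T.hlab u) C}.Nonempty := by
  obtain ⟨u, -, hu⟩ := T.t.exists_leaf T.t.root
  exact ⟨_, u, hu, rfl⟩

lemma val_nil (T : AmbTree X Y H) : T.val [] = T.rank := rfl

lemma val_le {T : AmbTree X Y H} {C : List (X × Set Y)} {u : T.t.V} (hu : T.t.IsLeaf u) :
    T.val C ≤ T.relCount u + pend (T.hlab u) C :=
  Nat.sInf_le ⟨u, hu, rfl⟩

lemma le_val {T : AmbTree X Y H} {C : List (X × Set Y)} {m : ℕ}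
    (h : ∀ u : T.t.V, T.t.IsLeaf u → m ≤ T.relCount u + pend (T.hlab u) C) :
    m ≤ T.val C := by
  apply le_csInf (T.valSet_nonempty C)
  rintro n ⟨u, hu, rfl⟩
  exact h u hu

lemma val_concat_le (T : AmbTree X Y H) (C : List (X × Set Y)) (c : X × Set Y) :
    T.val (C ++ [c]) ≤ T.val C + 1 := by
  obtain ⟨u, hu, huv'⟩ := Nat.sInf_mem (T.valSet_nonempty C)
  have huv : T.val C = T.relCount u + pend (T.hlab u) C := huv'
  calc T.val (C ++ [c]) ≤ T.relCount u + pend (T.hlab u) (C ++ [c]) := val_le hu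
    _ ≤ T.relCount u + (pend (T.hlab u) C + 1) := by
        have := pend_concat_le (T.hlab u) C c
        omega
    _ = T.val C + 1 := by rw [huv]; omega

lemma relCount_le_depthOf (T : AmbTree X Y H) (u : T.t.V) :
    T.relCount u ≤ T.t.depthOf u := by
  unfold relCount
  have hsub : ∀ a ∈ {a : T.t.V | T.Relevant a u},
      T.t.depthOf a ∈ Set.Icc 1 (T.t.depthOf u) := by
    rintro a ⟨haroot, hanc, -⟩
    constructor
    · rcases Nat.eq_zero_or_pos (T.t.depthOf a) with h0 | h1
      · exact absurd (T.t.depthOf_eq_zero_iff.1 h0) haroot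
      · exact h1
    · exact T.t.anc_depth_le hanc
  have hinj : Set.InjOn T.t.depthOf {a : T.t.V | T.Relevant a u} := by
    rintro a ⟨-, ha, -⟩ b ⟨-, hb, -⟩ hd
    rcases le_total (T.t.depthOf a) (T.t.depthOf b) with hle | hle
    · exact T.t.anc_antisymm (T.t.anc_chain ha hb hle) (T.t.anc_chain hb ha (le_of_eq hd.symm))
    · exact T.t.anc_antisymm (T.t.anc_chain ha hb (le_of_eq hd)) (T.t.anc_chain hb ha hle)
  calc {a : T.t.V | T.Relevant a u}.ncard
      ≤ (Set.Icc 1 (T.t.depthOf u)).ncard :=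
        Set.ncard_le_ncard_of_injOn T.t.depthOf hsub hinj (Set.finite_Icc _ _)
    _ = T.t.depthOf u := by
        rw [← Finset.coe_Icc, Set.ncard_coe_finset, Nat.card_Icc]
        omega

lemma val_le_depth_add (T : AmbTree X Y H) (C : List (X × Set Y)) :
    T.val C ≤ T.depth + C.length := by
  obtain ⟨u, -, hu⟩ := T.t.exists_leaf T.t.root
  calc T.val C ≤ T.relCount u + pend (T.hlab u) C := val_le hu
    _ ≤ T.t.depthOf u + C.length := by
        have h1 := T.relCount_le_depthOf u
        have h2 := pend_le_length (T.hlab u) C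
        omega
    _ ≤ T.depth + C.length := by
        have := T.t.depthOf_le_depth u
        unfold AmbTree.depth
        omega

/-- Recast a tree over a subclass as a tree over a superclass. -/
def castClass {G₁ G₂ : Set (X → Set Y)} (hsub : G₁ ⊆ G₂) (T : AmbTree X Y G₁) :
    AmbTree X Y G₂ :=
  { t := T.t, xlab := T.xlab, ylab := T.ylab, hlab := T.hlab, E0 := T.E0,
    e0_ne_root := T.e0_ne_root, e0_unique := T.e0_unique, sib_distinct := T.sib_distinct,
    hlab_mem := fun u hu => hsub (T.hlab_mem u hu), path_mem := T.path_mem }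

lemma castClass_val {G₁ G₂ : Set (X → Set Y)} (hsub : G₁ ⊆ G₂) (T : AmbTree X Y G₁)
    (C : List (X × Set Y)) : (castClass hsub T).val C = T.val C := rfl

lemma castClass_depth {G₁ G₂ : Set (X → Set Y)} (hsub : G₁ ⊆ G₂) (T : AmbTree X Y G₁) :
    (castClass hsub T).depth = T.depth := rfl

end AmbTree

lemma nat_sSup_le {s : Set ℕ} {m : ℕ} (h : ∀ r ∈ s, r ≤ m) : sSup s ≤ m := by
  rcases s.eq_empty_or_nonempty with rfl | hne
  · simp [csSup_empty]
  · exact csSup_le hne h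

/-- The potential: maximal value of a tree over `G` of depth at most `n`. -/
noncomputable def pot (G : Set (X → Set Y)) (C : List (X × Set Y)) (n : ℕ) : ℕ :=
  sSup {r : ℕ | ∃ T : AmbTree X Y G, T.depth ≤ n ∧ r = T.val C}

lemma potSet_bddAbove (G : Set (X → Set Y)) (C : List (X × Set Y)) (n : ℕ) :
    BddAbove {r : ℕ | ∃ T : AmbTree X Y G, T.depth ≤ n ∧ r = T.val C} := by
  refine ⟨n + C.length, ?_⟩
  rintro r ⟨T, hd, rfl⟩
  have := T.val_le_depth_add C
  omega

lemma le_pot {G : Set (X → Set Y)} {C : List (X × Set Y)} {n : ℕ}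
    (T : AmbTree X Y G) (hd : T.depth ≤ n) : T.val C ≤ pot G C n :=
  le_csSup (potSet_bddAbove G C n) ⟨T, hd, rfl⟩

lemma pot_le {G : Set (X → Set Y)} {C : List (X × Set Y)} {n m : ℕ}
    (h : ∀ T : AmbTree X Y G, T.depth ≤ n → T.val C ≤ m) : pot G C n ≤ m := by
  apply nat_sSup_le
  rintro r ⟨T, hd, rfl⟩
  exact h T hd

lemma pot_mono_class {G₁ G₂ : Set (X → Set Y)} (hsub : G₁ ⊆ G₂)
    (C : List (X × Set Y)) (n : ℕ) : pot G₁ C n ≤ pot G₂ C n := by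
  apply pot_le
  intro T hd
  have := le_pot (C := C) (n := n) (AmbTree.castClass hsub T)
    (by rwa [AmbTree.castClass_depth])
  rwa [AmbTree.castClass_val] at this

lemma pot_mono_n {G : Set (X → Set Y)} (C : List (X × Set Y)) {n₁ n₂ : ℕ}
    (h : n₁ ≤ n₂) : pot G C n₁ ≤ pot G C n₂ := by
  apply pot_le
  intro T hd
  exact le_pot T (le_trans hd h)

/-- The single-leaf tree. -/
noncomputable def leafTree (x0 : X) (y0 : Y) {G : Set (X → Set Y)}
    (g : X → Set Y) (hg : g ∈ G) : AmbTree X Y G where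
  t := { V := PUnit, root := PUnit.unit, parent := fun _ => PUnit.unit,
         parent_root := rfl, reaches := fun _ => ⟨0, rfl⟩ }
  xlab := fun _ => x0
  ylab := fun _ => y0
  hlab := fun _ => g
  E0 := ∅
  e0_ne_root := by rintro a ha; exact absurd ha (Set.notMem_empty a)
  e0_unique := by
    rintro v ⟨w, hw⟩
    exact absurd rfl hw.2
  sib_distinct := by
    intro a b ha
    exact absurd rfl ha
  hlab_mem := fun _ _ => hg
  path_mem := by
    intro u a _ _ ha
    exact absurd rfl ha

lemma leafTree_depth (x0 : X) (y0 : Y) {G : Set (X → Set Y)} (g : X → Set Y) (hg : g ∈ G) :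
    (leafTree x0 y0 g hg).depth = 0 := by
  apply Nat.le_antisymm _ (Nat.zero_le _)
  apply RTree.depth_le
  intro v
  have : v = PUnit.unit := rfl
  have h0 : (leafTree x0 y0 g hg).t.depthOf v = 0 :=
    RTree.depthOf_root _
  omega

lemma leafTree_val (x0 : X) (y0 : Y) {G : Set (X → Set Y)} (g : X → Set Y) (hg : g ∈ G)
    (C : List (X × Set Y)) : (leafTree x0 y0 g hg).val C = pend g C := by
  have hleaf : ∀ u : (leafTree x0 y0 g hg).t.V, (leafTree x0 y0 g hg).t.IsLeaf u := by
    intro u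
    have hch : (leafTree x0 y0 g hg).t.children u = ∅ := by
      ext w
      simp only [RTree.children, Set.mem_setOf_eq, Set.mem_empty_iff_false, iff_false, not_and,
        ne_eq, not_not]
      intro _
      cases w
      rfl
    exact hch
  have hrel : ∀ u : (leafTree x0 y0 g hg).t.V, (leafTree x0 y0 g hg).relCount u = 0 := by
    intro u
    unfold AmbTree.relCount
    convert Set.ncard_empty ((leafTree x0 y0 g hg).t.V)
    ext a
    simp only [Set.mem_setOf_eq, Set.mem_empty_iff_false, iff_false]
    intro hrel
    exact hrel.1 rfl
  have hset : {n : ℕ | ∃ u : (leafTree x0 y0 g hg).t.V,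
      (leafTree x0 y0 g hg).t.IsLeaf u ∧
        n = (leafTree x0 y0 g hg).relCount u + pend ((leafTree x0 y0 g hg).hlab u) C}
      = {pend g C} := by
    ext n
    simp only [Set.mem_setOf_eq, Set.mem_singleton_iff]
    constructor
    · rintro ⟨u, -, rfl⟩
      rw [hrel u]
      simp [leafTree]
    · rintro rfl
      refine ⟨PUnit.unit, hleaf _, ?_⟩
      rw [hrel PUnit.unit]
      simp [leafTree]
  unfold AmbTree.val
  rw [hset]
  exact csInf_singleton _

lemma pend_le_pot {G : Set (X → Set Y)} {g : X → Set Y} (hg : g ∈ G)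
    (x0 : X) (y0 : Y) (C : List (X × Set Y)) (n : ℕ) : pend g C ≤ pot G C n := by
  have := le_pot (C := C) (n := n) (leafTree x0 y0 g hg)
    (by rw [leafTree_depth]; exact Nat.zero_le n)
  rwa [leafTree_val] at this

lemma pot_attained {G : Set (X → Set Y)} (hG : G.Nonempty) (x0 : X) (y0 : Y)
    (C : List (X × Set Y)) (n : ℕ) :
    ∃ T : AmbTree X Y G, T.depth ≤ n ∧ T.val C = pot G C n := by
  obtain ⟨g, hg⟩ := hG
  have hne : {r : ℕ | ∃ T : AmbTree X Y G, T.depth ≤ n ∧ r = T.val C}.Nonempty :=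
    ⟨_, leafTree x0 y0 g hg, by rw [leafTree_depth]; exact Nat.zero_le n, rfl⟩
  obtain ⟨T, hd, hv⟩ := Nat.sSup_mem hne (potSet_bddAbove G C n)
  exact ⟨T, hd, hv.symm⟩

lemma ALn_eq_pot (N : ℕ) : ALn X Y H N = pot H [] N := rfl

end Potential
section Glue

variable {X Y : Type} [Fintype Y] {G : Set (X → Set Y)} {ι : Type} [Fintype ι]

variable (Ts : ι → AmbTree X Y G)

/-- Parent map of the glued tree. -/
noncomputable def gParent : Option (Σ i : ι, (Ts i).t.V) → Option (Σ i : ι, (Ts i).t.V)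
  | none => none
  | some ⟨i, w⟩ => if w = (Ts i).t.root then none else some ⟨i, (Ts i).t.parent w⟩

lemma osome_inj {i j : ι} {a : (Ts i).t.V} {b : (Ts j).t.V}
    (h : (some ⟨i, a⟩ : Option (Σ i : ι, (Ts i).t.V)) = some ⟨j, b⟩) :
    ∃ hij : i = j, HEq a b := by
  injection h with h'
  injection h' with h1 h2
  exact ⟨h1, h2⟩

lemma gParent_root (i : ι) :
    gParent Ts (some ⟨i, (Ts i).t.root⟩) = none := by
  simp [gParent]

lemma gParent_nonroot {i : ι} {w : (Ts i).t.V} (hw : w ≠ (Ts i).t.root) :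
    gParent Ts (some ⟨i, w⟩) = some ⟨i, (Ts i).t.parent w⟩ := by
  simp [gParent, hw]

lemma gParent_iterate (i : ι) (w : (Ts i).t.V) :
    ∀ k : ℕ, k ≤ (Ts i).t.depthOf w →
      (gParent Ts)^[k] (some ⟨i, w⟩) = some ⟨i, (Ts i).t.parent^[k] w⟩ := by
  intro k
  induction k generalizing w with
  | zero => intro _; simp
  | succ k ih =>
    intro hk
    have hw : w ≠ (Ts i).t.root := by
      intro hroot
      rw [hroot, (Ts i).t.depthOf_root] at hk
      omega
    rw [Function.iterate_succ_apply, gParent_nonroot Ts hw,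
      Function.iterate_succ_apply]
    apply ih
    have := (Ts i).t.depthOf_parent hw
    omega

lemma gParent_none_iterate (k : ℕ) :
    (gParent Ts)^[k] (none : Option (Σ i : ι, (Ts i).t.V)) = none :=
  Function.iterate_fixed rfl k

/-- The glued rooted tree. -/
noncomputable def gRT : RTree where
  V := Option (Σ i : ι, (Ts i).t.V)
  root := none
  parent := gParent Ts
  parent_root := rfl
  reaches := by
    rintro (_ | ⟨i, w⟩)
    · exact ⟨0, rfl⟩
    · refine ⟨(Ts i).t.depthOf w + 1, ?_⟩
      rw [Function.iterate_succ_apply',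
        gParent_iterate Ts i w _ (le_refl _), (Ts i).t.iterate_depthOf,
        gParent_root]

@[simp] lemma gRT_root : (gRT Ts).root = none := rfl
@[simp] lemma gRT_parent : (gRT Ts).parent = gParent Ts := rfl

lemma gRT_depthOf_some (i : ι) (w : (Ts i).t.V) :
    (gRT Ts).depthOf (some ⟨i, w⟩) = (Ts i).t.depthOf w + 1 := by
  apply le_antisymm
  · apply Nat.sInf_le
    show (gParent Ts)^[(Ts i).t.depthOf w + 1] (some ⟨i, w⟩) = none
    rw [Function.iterate_succ_apply',
      gParent_iterate Ts i w _ (le_refl _), (Ts i).t.iterate_depthOf, gParent_root]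
  · apply le_csInf ((gRT Ts).depthSet_nonempty _)
    intro k hk
    by_contra hlt
    push_neg at hlt
    have hkle : k ≤ (Ts i).t.depthOf w := by omega
    have := gParent_iterate Ts i w k hkle
    rw [Set.mem_setOf_eq] at hk
    simp only [gRT] at hk
    rw [this] at hk
    exact Option.some_ne_none _ hk

lemma gRT_children_some {i : ι} {u : (Ts i).t.V} {c : Option (Σ i : ι, (Ts i).t.V)} :
    c ∈ (gRT Ts).children (some ⟨i, u⟩) ↔
      ∃ w ∈ (Ts i).t.children u, c = some ⟨i, w⟩ := by
  constructor
  · rintro ⟨hpar, hroot⟩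
    match c with
    | none => exact absurd rfl hroot
    | some ⟨j, w⟩ =>
      by_cases hw : w = (Ts j).t.root
      · rw [show (gRT Ts).parent (some ⟨j, w⟩) = none from by
          rw [gRT_parent, hw]; exact gParent_root Ts j] at hpar
        exact absurd hpar.symm (Option.some_ne_none _)
      · rw [gRT_parent, gParent_nonroot Ts hw] at hpar
        obtain ⟨rfl, hheq⟩ := osome_inj Ts hpar
        exact ⟨w, ⟨eq_of_heq hheq, hw⟩, rfl⟩
  · rintro ⟨w, hw, rfl⟩
    refine ⟨?_, Option.some_ne_none _⟩
    rw [gRT_parent, gParent_nonroot Ts hw.2, hw.1]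

lemma gRT_children_none {c : Option (Σ i : ι, (Ts i).t.V)} :
    c ∈ (gRT Ts).children (none : (gRT Ts).V) ↔
      ∃ i : ι, c = some ⟨i, (Ts i).t.root⟩ := by
  constructor
  · rintro ⟨hpar, hroot⟩
    match c with
    | none => exact absurd rfl hroot
    | some ⟨j, w⟩ =>
      by_cases hw : w = (Ts j).t.root
      · exact ⟨j, by rw [hw]⟩
      · rw [gRT_parent, gParent_nonroot Ts hw] at hpar
        exact absurd hpar (Option.some_ne_none _)
  · rintro ⟨i, rfl⟩
    exact ⟨gParent_root Ts i, Option.some_ne_none _⟩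

lemma gRT_isLeaf_some {i : ι} {u : (Ts i).t.V} :
    (gRT Ts).IsLeaf (some ⟨i, u⟩) ↔ (Ts i).t.IsLeaf u := by
  constructor
  · intro hleaf
    ext w
    simp only [Set.mem_empty_iff_false, iff_false]
    intro hw
    have : some ⟨i, w⟩ ∈ (gRT Ts).children (some ⟨i, u⟩) :=
      (gRT_children_some Ts).2 ⟨w, hw, rfl⟩
    rw [hleaf] at this
    exact this
  · intro hleaf
    ext c
    simp only [Set.mem_empty_iff_false, iff_false]
    intro hc
    obtain ⟨w, hw, rfl⟩ := (gRT_children_some Ts).1 hc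
    rw [hleaf] at hw
    exact hw

lemma gRT_anc_of_anc {i : ι} {b u : (Ts i).t.V} (h : (Ts i).t.Anc b u) :
    (gRT Ts).Anc (some ⟨i, b⟩) (some ⟨i, u⟩) := by
  refine ⟨(Ts i).t.depthOf u - (Ts i).t.depthOf b, ?_⟩
  have hle : (Ts i).t.depthOf u - (Ts i).t.depthOf b ≤ (Ts i).t.depthOf u := by omega
  show (gParent Ts)^[_] (some ⟨i, u⟩) = _
  rw [gParent_iterate Ts i u _ hle, (Ts i).t.anc_iterate_eq h]

lemma gRT_anc_cases {i : ι} {u : (Ts i).t.V} {a : Option (Σ i : ι, (Ts i).t.V)}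
    (h : (gRT Ts).Anc a (some ⟨i, u⟩)) :
    a = none ∨ ∃ b : (Ts i).t.V, a = some ⟨i, b⟩ ∧ (Ts i).t.Anc b u := by
  obtain ⟨k, hk⟩ := h
  by_cases hkle : k ≤ (Ts i).t.depthOf u
  · right
    have := gParent_iterate Ts i u k hkle
    rw [show ((gRT Ts).parent)^[k] (some ⟨i,u⟩) = (gParent Ts)^[k] (some ⟨i,u⟩) from rfl,
      this] at hk
    exact ⟨(Ts i).t.parent^[k] u, hk.symm, ⟨k, rfl⟩⟩
  · left
    push_neg at hkle
    have hsplit : k = (k - ((Ts i).t.depthOf u + 1)) + ((Ts i).t.depthOf u + 1) := by omega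
    rw [show ((gRT Ts).parent)^[k] (some ⟨i,u⟩) = (gParent Ts)^[k] (some ⟨i,u⟩) from rfl,
      hsplit, Function.iterate_add_apply, Function.iterate_succ_apply',
      gParent_iterate Ts i u _ (le_refl _), (Ts i).t.iterate_depthOf, gParent_root,
      gParent_none_iterate] at hk
    exact hk.symm

variable (x : X) (lab : ι → Y) (i0 : ι)

/-- The glued ambiguous tree. -/
noncomputable def gTree (hlabinj : Function.Injective lab)
    (hcompat : ∀ (i : ι) (u : (Ts i).t.V), (Ts i).t.IsLeaf u → lab i ∈ (Ts i).hlab u x) :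
    AmbTree X Y G where
  t := gRT Ts
  xlab := fun v => match v with
    | none => x
    | some ⟨i, w⟩ => (Ts i).xlab w
  ylab := fun v => match v with
    | none => lab i0
    | some ⟨i, w⟩ => if w = (Ts i).t.root then lab i else (Ts i).ylab w
  hlab := fun v => match v with
    | none => (Ts i0).hlab (Ts i0).t.root
    | some ⟨i, w⟩ => (Ts i).hlab w
  E0 := {v | v = some ⟨i0, (Ts i0).t.root⟩ ∨
    ∃ (i : ι) (w : (Ts i).t.V), v = some ⟨i, w⟩ ∧ w ∈ (Ts i).E0}
  e0_ne_root := by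
    rintro a (rfl | ⟨i, w, rfl, hw⟩) <;> exact Option.some_ne_none _
  e0_unique := by
    rintro (_ | ⟨i, u⟩) hcn
    · refine ⟨some ⟨i0, (Ts i0).t.root⟩, ⟨(gRT_children_none Ts).2 ⟨i0, rfl⟩, Or.inl rfl⟩, ?_⟩
      rintro b ⟨hbc, (rfl | ⟨i, w, rfl, hw⟩)⟩
      · rfl
      · obtain ⟨j, hj⟩ := (gRT_children_none Ts).1 hbc
        obtain ⟨rfl, hheq⟩ := osome_inj Ts hj
        exact absurd (eq_of_heq hheq) ((Ts i).e0_ne_root w hw)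
    · obtain ⟨c, hc⟩ := hcn
      obtain ⟨w, hw, rfl⟩ := (gRT_children_some Ts).1 hc
      obtain ⟨a, ⟨hac, haE⟩, hauniq⟩ := (Ts i).e0_unique u ⟨w, hw⟩
      refine ⟨some ⟨i, a⟩, ⟨(gRT_children_some Ts).2 ⟨a, hac, rfl⟩, Or.inr ⟨i, a, rfl, haE⟩⟩, ?_⟩
      rintro b ⟨hbc, hbE⟩
      obtain ⟨w', hw', rfl⟩ := (gRT_children_some Ts).1 hbc
      rcases hbE with heq | ⟨j, w'', heq, hwE⟩
      · obtain ⟨rfl, hheq⟩ := osome_inj Ts heq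
        exact absurd (eq_of_heq hheq) hw'.2
      · obtain ⟨rfl, hheq⟩ := osome_inj Ts heq
        rw [eq_of_heq hheq] at hw' ⊢
        rw [hauniq w'' ⟨hw', hwE⟩]
  sib_distinct := by
    intro a b haroot hbroot hpar hne
    match a, b with
    | none, _ => exact absurd rfl haroot
    | some _, none => exact absurd rfl hbroot
    | some ⟨i, v⟩, some ⟨j, w⟩ =>
      by_cases hv : v = (Ts i).t.root <;> by_cases hw : w = (Ts j).t.root
      · subst hv; subst hw
        simp only [if_pos rfl]
        intro hlab'
        exact hne (by rw [hlabinj hlab'])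
      · rw [gRT_parent, gParent_nonroot Ts hw, show gParent Ts (some ⟨i, v⟩) = none from by
          rw [hv]; exact gParent_root Ts i] at hpar
        exact absurd hpar.symm (Option.some_ne_none _)
      · rw [gRT_parent, gParent_nonroot Ts hv, show gParent Ts (some ⟨j, w⟩) = none from by
          rw [hw]; exact gParent_root Ts j] at hpar
        exact absurd hpar (Option.some_ne_none _)
      · rw [gRT_parent, gParent_nonroot Ts hv, gParent_nonroot Ts hw] at hpar
        obtain ⟨rfl, hheq⟩ := osome_inj Ts hpar
        simp only [if_neg hv, if_neg hw]
        apply (Ts i).sib_distinct v w hv hw (eq_of_heq hheq) (fun hvw => hne (by rw [hvw]))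
  hlab_mem := by
    rintro (_ | ⟨i, u⟩) hleaf
    · exfalso
      have : some ⟨i0, (Ts i0).t.root⟩ ∈ (gRT Ts).children none :=
        (gRT_children_none Ts).2 ⟨i0, rfl⟩
      rw [show (gRT Ts).children none = ∅ from hleaf] at this
      exact this
    · exact (Ts i).hlab_mem u ((gRT_isLeaf_some Ts).1 hleaf)
  path_mem := by
    rintro (_ | ⟨i, u⟩) a hleaf hanc haroot
    · exfalso
      have : some ⟨i0, (Ts i0).t.root⟩ ∈ (gRT Ts).children none :=
        (gRT_children_none Ts).2 ⟨i0, rfl⟩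
      rw [show (gRT Ts).children none = ∅ from hleaf] at this
      exact this
    · have hleaf' := (gRT_isLeaf_some Ts).1 hleaf
      rcases gRT_anc_cases Ts hanc with rfl | ⟨b, rfl, hbanc⟩
      · exact absurd rfl haroot
      · by_cases hb : b = (Ts i).t.root
        · subst hb
          rw [show (gRT Ts).parent (some ⟨i, (Ts i).t.root⟩) = none from gParent_root Ts i]
          simp only [if_pos rfl]
          exact hcompat i u hleaf'
        · rw [show (gRT Ts).parent (some ⟨i, b⟩) = some ⟨i, (Ts i).t.parent b⟩ from
            gParent_nonroot Ts hb]
          simp only [if_neg hb]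
          exact (Ts i).path_mem u b hleaf' hbanc hb

end Glue
section Glue2

variable {X Y : Type} [Fintype Y] {G : Set (X → Set Y)} {ι : Type} [Fintype ι]
variable (Ts : ι → AmbTree X Y G) (x : X) (lab : ι → Y) (i0 : ι)
variable (hlabinj : Function.Injective lab)
variable (hcompat : ∀ (i : ι) (u : (Ts i).t.V), (Ts i).t.IsLeaf u → lab i ∈ (Ts i).hlab u x)

lemma gTree_t : (gTree Ts x lab i0 hlabinj hcompat).t = gRT Ts := rfl

lemma gTree_depth_le {m : ℕ} (h : ∀ i, (Ts i).depth ≤ m) :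
    (gTree Ts x lab i0 hlabinj hcompat).depth ≤ m + 1 := by
  apply RTree.depth_le
  rintro (_ | ⟨i, w⟩)
  · have h0 : (gRT Ts).depthOf none = 0 := (gRT Ts).depthOf_root
    rw [show ((gTree Ts x lab i0 hlabinj hcompat).t).depthOf none = (gRT Ts).depthOf none
      from rfl, h0]
    omega
  · rw [show ((gTree Ts x lab i0 hlabinj hcompat).t).depthOf (some ⟨i, w⟩)
      = (gRT Ts).depthOf (some ⟨i, w⟩) from rfl, gRT_depthOf_some]
    have h1 := (Ts i).t.depthOf_le_depth w
    have h2 := h i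
    unfold AmbTree.depth at h2
    omega

lemma gTree_relevant_nonroot {i : ι} {u b : (Ts i).t.V} (hb : b ≠ (Ts i).t.root) :
    (gTree Ts x lab i0 hlabinj hcompat).Relevant (some ⟨i, b⟩) (some ⟨i, u⟩) ↔
      (Ts i).Relevant b u := by
  constructor
  · rintro ⟨-, hanc, hclause⟩
    have hanc' : (Ts i).t.Anc b u := by
      rcases gRT_anc_cases Ts hanc with heq | ⟨b', heq, hanc'⟩
      · exact absurd heq (Option.some_ne_none _)
      · obtain ⟨-, hheq⟩ := osome_inj Ts heq
        rwa [eq_of_heq hheq]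
    refine ⟨hb, hanc', ?_⟩
    rcases hclause with hnE0 | ⟨b', hpb', hb'root, hb'y⟩
    · left
      intro hbE0
      exact hnE0 (Or.inr ⟨i, b, rfl, hbE0⟩)
    · rw [show (gTree Ts x lab i0 hlabinj hcompat).t.parent (some ⟨i, b⟩)
        = some ⟨i, (Ts i).t.parent b⟩ from gParent_nonroot Ts hb] at hpb' hb'y
      match b' with
      | none =>
        rw [show (gTree Ts x lab i0 hlabinj hcompat).t.parent none = none from rfl] at hpb'
        exact absurd hpb' (Option.some_ne_none _).symm
      | some ⟨j, w⟩ =>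
        by_cases hw : w = (Ts j).t.root
        · rw [show (gTree Ts x lab i0 hlabinj hcompat).t.parent (some ⟨j, w⟩) = none from by
            rw [hw]; exact gParent_root Ts j] at hpb'
          exact absurd hpb'.symm (Option.some_ne_none _)
        · rw [show (gTree Ts x lab i0 hlabinj hcompat).t.parent (some ⟨j, w⟩)
            = some ⟨j, (Ts j).t.parent w⟩ from gParent_nonroot Ts hw] at hpb'
          obtain ⟨rfl, hheq⟩ := osome_inj Ts hpb'
          right
          refine ⟨w, eq_of_heq hheq, hw, ?_⟩
          simpa [gTree, hw] using hb'y
  · rintro ⟨-, hanc, hclause⟩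
    refine ⟨Option.some_ne_none _, gRT_anc_of_anc Ts hanc, ?_⟩
    rcases hclause with hnE0 | ⟨w, hpw, hwroot, hwy⟩
    · left
      rintro (heq | ⟨j, w, heq, hwE⟩)
      · obtain ⟨rfl, hheq⟩ := osome_inj Ts heq
        exact hb (eq_of_heq hheq)
      · obtain ⟨rfl, hheq⟩ := osome_inj Ts heq
        rw [eq_of_heq hheq] at hnE0
        exact hnE0 hwE
    · right
      refine ⟨some ⟨i, w⟩, ?_, Option.some_ne_none _, ?_⟩
      · rw [show (gTree Ts x lab i0 hlabinj hcompat).t.parent (some ⟨i, w⟩)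
          = some ⟨i, (Ts i).t.parent w⟩ from gParent_nonroot Ts hwroot,
          show (gTree Ts x lab i0 hlabinj hcompat).t.parent (some ⟨i, b⟩)
          = some ⟨i, (Ts i).t.parent b⟩ from gParent_nonroot Ts hb, hpw]
      · rw [show (gTree Ts x lab i0 hlabinj hcompat).t.parent (some ⟨i, b⟩)
          = some ⟨i, (Ts i).t.parent b⟩ from gParent_nonroot Ts hb]
        simpa [gTree, hwroot] using hwy

lemma gTree_relevant_root {i : ι} {u : (Ts i).t.V} :
    (gTree Ts x lab i0 hlabinj hcompat).Relevant (some ⟨i, (Ts i).t.root⟩) (some ⟨i, u⟩) ↔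
      (i ≠ i0 ∨ ∃ j : ι, lab j ∉ (Ts i).hlab u x) := by
  constructor
  · rintro ⟨-, -, hclause⟩
    rcases hclause with hnE0 | ⟨b', hpb', hb'root, hb'y⟩
    · left
      intro hi
      subst hi
      exact hnE0 (Or.inl rfl)
    · rw [show (gTree Ts x lab i0 hlabinj hcompat).t.parent (some ⟨i, (Ts i).t.root⟩)
        = none from gParent_root Ts i] at hpb' hb'y
      match b' with
      | none => exact absurd rfl hb'root
      | some ⟨j, w⟩ =>
        by_cases hw : w = (Ts j).t.root
        · right
          refine ⟨j, ?_⟩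
          subst hw
          simpa [gTree] using hb'y
        · rw [show (gTree Ts x lab i0 hlabinj hcompat).t.parent (some ⟨j, w⟩)
            = some ⟨j, (Ts j).t.parent w⟩ from gParent_nonroot Ts hw] at hpb'
          exact absurd hpb' (Option.some_ne_none _)
  · intro hcase
    refine ⟨Option.some_ne_none _, gRT_anc_of_anc Ts ((Ts i).t.anc_root u), ?_⟩
    rcases hcase with hi | ⟨j, hj⟩
    · left
      rintro (heq | ⟨j, w, heq, hwE⟩)
      · obtain ⟨rfl, -⟩ := osome_inj Ts heq
        exact hi rfl
      · obtain ⟨rfl, hheq⟩ := osome_inj Ts heq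
        exact (Ts i).e0_ne_root w hwE (eq_of_heq hheq).symm
    · right
      refine ⟨some ⟨j, (Ts j).t.root⟩, ?_, Option.some_ne_none _, ?_⟩
      · rw [show (gTree Ts x lab i0 hlabinj hcompat).t.parent (some ⟨j, (Ts j).t.root⟩)
          = none from gParent_root Ts j,
          show (gTree Ts x lab i0 hlabinj hcompat).t.parent (some ⟨i, (Ts i).t.root⟩)
          = none from gParent_root Ts i]
      · rw [show (gTree Ts x lab i0 hlabinj hcompat).t.parent (some ⟨i, (Ts i).t.root⟩)
          = none from gParent_root Ts i]
        simpa [gTree] using hj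

lemma gTree_relCount {i : ι} {u : (Ts i).t.V} (hleaf : (Ts i).t.IsLeaf u) :
    (gTree Ts x lab i0 hlabinj hcompat).relCount (some ⟨i, u⟩) =
      (Ts i).relCount u +
        (if (i ≠ i0 ∨ ∃ j : ι, lab j ∉ (Ts i).hlab u x) then 1 else 0) := by
  unfold AmbTree.relCount
  have hset : {a | (gTree Ts x lab i0 hlabinj hcompat).Relevant a (some ⟨i, u⟩)} =
      ((fun b => (some ⟨i, b⟩ : Option (Σ i : ι, (Ts i).t.V))) '' {b | (Ts i).Relevant b u}) ∪
        (if (i ≠ i0 ∨ ∃ j : ι, lab j ∉ (Ts i).hlab u x)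
          then {some ⟨i, (Ts i).t.root⟩} else ∅) := by
    ext a
    simp only [Set.mem_setOf_eq, Set.mem_union, Set.mem_image]
    constructor
    · intro hrel
      have hanccase := gRT_anc_cases Ts hrel.2.1
      rcases hanccase with rfl | ⟨b, rfl, hbanc⟩
      · exact absurd rfl hrel.1
      · by_cases hb : b = (Ts i).t.root
        · subst hb
          rw [if_pos ((gTree_relevant_root Ts x lab i0 hlabinj hcompat).1 hrel)]
          right; rfl
        · left
          exact ⟨b, (gTree_relevant_nonroot Ts x lab i0 hlabinj hcompat hb).1 hrel, rfl⟩
    · rintro (⟨b, hb, rfl⟩ | hmem)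
      · exact (gTree_relevant_nonroot Ts x lab i0 hlabinj hcompat hb.1).2 hb
      · split_ifs at hmem with hcond
        · change a = some ⟨i, (Ts i).t.root⟩ at hmem
          subst hmem
          exact (gTree_relevant_root Ts x lab i0 hlabinj hcompat).2 hcond
        · exact absurd hmem (Set.notMem_empty a)
  rw [hset]
  have hinj : Function.Injective (fun b => (some ⟨i, b⟩ : Option (Σ i : ι, (Ts i).t.V))) := by
    intro a b hab
    obtain ⟨-, hheq⟩ := osome_inj Ts hab
    exact eq_of_heq hheq
  have hdisj : Disjoint
      ((fun b => (some ⟨i, b⟩ : Option (Σ i : ι, (Ts i).t.V))) '' {b | (Ts i).Relevant b u})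
      (if (i ≠ i0 ∨ ∃ j : ι, lab j ∉ (Ts i).hlab u x)
        then {some ⟨i, (Ts i).t.root⟩} else ∅) := by
    split_ifs
    · rw [Set.disjoint_singleton_right]
      rintro ⟨b, hb, heq⟩
      obtain ⟨-, hheq⟩ := osome_inj Ts heq
      exact hb.1 (eq_of_heq hheq)
    · exact Set.disjoint_empty _
  refine (Set.ncard_union_eq hdisj (Set.toFinite _) (by split_ifs <;> simp)).trans ?_
  rw [Set.ncard_image_of_injective _ hinj]
  split_ifs <;> simp

lemma gTree_val_ge (C : List (X × Set Y)) (v : ℕ)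
    (hne_i : ∀ (i : ι) (u : (Ts i).t.V), (Ts i).t.IsLeaf u → i ≠ i0 →
      v ≤ (Ts i).relCount u + pend ((Ts i).hlab u) C + 1)
    (h_i0 : ∀ u : (Ts i0).t.V, (Ts i0).t.IsLeaf u →
      v ≤ (Ts i0).relCount u + pend ((Ts i0).hlab u) C +
        (if (∃ j : ι, lab j ∉ (Ts i0).hlab u x) then 1 else 0)) :
    v ≤ (gTree Ts x lab i0 hlabinj hcompat).val C := by
  apply AmbTree.le_val
  rintro (_ | ⟨i, u⟩) hleaf
  · exfalso
    have hmem : some ⟨i0, (Ts i0).t.root⟩ ∈ (gRT Ts).children none :=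
      (gRT_children_none Ts).2 ⟨i0, rfl⟩
    rw [show (gRT Ts).children none = ∅ from hleaf] at hmem
    exact hmem
  · have hleaf' := (gRT_isLeaf_some Ts).1 hleaf
    rw [gTree_relCount Ts x lab i0 hlabinj hcompat hleaf']
    have hhlab : (gTree Ts x lab i0 hlabinj hcompat).hlab (some ⟨i, u⟩) = (Ts i).hlab u := rfl
    rw [hhlab]
    by_cases hi : i = i0
    · subst hi
      have := h_i0 u hleaf'
      have hcondeq : (i ≠ i ∨ ∃ j : ι, lab j ∉ (Ts i).hlab u x) ↔
          (∃ j : ι, lab j ∉ (Ts i).hlab u x) := by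
        constructor
        · rintro (hne | hj)
          · exact absurd rfl hne
          · exact hj
        · exact Or.inr
      split_ifs with h1
      · split_ifs at this with h2
        · omega
        · exact absurd (hcondeq.1 h1) h2
      · split_ifs at this with h2
        · exact absurd (hcondeq.2 h2) h1
        · omega
    · have := hne_i i u hleaf' hi
      rw [if_pos (Or.inl hi)]
      omega

end Glue2
section Key

variable {X Y : Type} [Fintype Y]

/-- Version space update. -/
def upd (G : Set (X → Set Y)) (x : X) (y : Y) : Set (X → Set Y) := {g ∈ G | y ∈ g x}

lemma upd_subset (G : Set (X → Set Y)) (x : X) (y : Y) : upd G x y ⊆ G :=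
  fun _ hg => hg.1

/-- The learner's prediction. -/
noncomputable def predictS (G : Set (X → Set Y)) (C : List (X × Set Y)) (m : ℕ) (x : X) :
    Set Y :=
  {y : Y | (upd G x y).Nonempty ∧ pot G C (m+1) ≤ pot (upd G x y) C m}

lemma key_lemma (x0 : X) (y0 : Y) (G : Set (X → Set Y)) (C : List (X × Set Y))
    (m : ℕ) (x : X) {y : Y} (hy : y ∈ predictS G C m x) :
    pot (upd G x y) (C ++ [(x, predictS G C m x)]) m ≤ pot G C (m+1) := by
  set S := predictS G C m x with hSdef
  set d := pot G C (m+1) with hddef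
  apply pot_le
  intro T hdT
  set v := T.val (C ++ [(x, S)]) with hvdef
  -- v is at most d + 1
  have hupdG : pot (upd G x y) C m ≤ d := by
    rw [hddef]
    calc pot (upd G x y) C m ≤ pot G C m := pot_mono_class (upd_subset G x y) C m
      _ ≤ pot G C (m+1) := pot_mono_n C (by omega)
  have hvd : v ≤ d + 1 := by
    calc v ≤ T.val C + 1 := T.val_concat_le C _
      _ ≤ pot (upd G x y) C m + 1 := by
          have := le_pot (C := C) (n := m) T hdT
          omega
      _ ≤ d + 1 := by omega
  -- index type
  letI : Fintype ↥S := (S.toFinite).fintype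
  set i0 : ↥S := ⟨y, hy⟩ with hi0def
  -- the family of subtrees
  have hchoice : ∀ i : ↥S, ∃ T' : AmbTree X Y G, T'.depth ≤ m ∧
      (∀ u : T'.t.V, T'.t.IsLeaf u → (i : Y) ∈ T'.hlab u x) ∧
      (∀ u : T'.t.V, T'.t.IsLeaf u →
        v ≤ T'.relCount u + pend (T'.hlab u) C +
          (if i = i0 then (if (∃ j : ↥S, (j : Y) ∉ T'.hlab u x) then 1 else 0) else 1)) := by
    intro i
    by_cases hi : i = i0
    · subst hi
      refine ⟨AmbTree.castClass (upd_subset G x y) T, hdT, ?_, ?_⟩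
      · intro u hu
        exact (T.hlab_mem u hu).2
      · intro u hu
        rw [if_pos rfl]
        have hle : v ≤ T.relCount u + pend (T.hlab u) (C ++ [(x, S)]) :=
          AmbTree.val_le hu
        rw [pend_concat] at hle
        show v ≤ T.relCount u + pend (T.hlab u) C +
          (if (∃ j : ↥S, (j : Y) ∉ T.hlab u x) then 1 else 0)
        by_cases hsub : S ⊆ T.hlab u x
        · rw [if_pos hsub] at hle
          split_ifs <;> omega
        · rw [if_neg hsub] at hle
          have hwit : ∃ j : ↥S, (j : Y) ∉ T.hlab u x := by
            rw [Set.not_subset] at hsub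
            obtain ⟨y', hy', hy'n⟩ := hsub
            exact ⟨⟨y', hy'⟩, hy'n⟩
          rw [if_pos hwit]
          omega
    · have hne : (upd G x (i : Y)).Nonempty := i.2.1
      obtain ⟨T', hdT', hvT'⟩ := pot_attained hne x0 y0 C m
      refine ⟨AmbTree.castClass (upd_subset G x (i : Y)) T', hdT', ?_, ?_⟩
      · intro u hu
        exact (T'.hlab_mem u hu).2
      · intro u hu
        rw [if_neg hi]
        show v ≤ T'.relCount u + pend (T'.hlab u) C + 1
        have h1 : T'.val C ≤ T'.relCount u + pend (T'.hlab u) C := AmbTree.val_le hu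
        have h2 : d ≤ pot (upd G x (i : Y)) C m := i.2.2
        rw [hvT'] at h1
        omega
  choose Ts hTd hTcomp hTbnd using hchoice
  have hlabinj : Function.Injective (fun i : ↥S => (i : Y)) := Subtype.coe_injective
  set Tg := gTree Ts x (fun i : ↥S => (i : Y)) i0 hlabinj hTcomp with hTgdef
  have hTgd : Tg.depth ≤ m + 1 := gTree_depth_le _ _ _ _ _ _ hTd
  have hTgv : v ≤ Tg.val C := by
    apply gTree_val_ge
    · intro i u hu hi
      have := hTbnd i u hu
      rw [if_neg hi] at this
      exact this
    · intro u hu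
      have := hTbnd i0 u hu
      rw [if_pos rfl] at this
      exact this
  have := le_pot (C := C) (n := m + 1) Tg hTgd
  omega

end Key
section Learner

variable {X Y : Type} [Fintype Y]

/-- Learner state: version space, pending pairs, remaining rounds. -/
structure LState (X Y : Type) where
  G : Set (X → Set Y)
  C : List (X × Set Y)
  n : ℕ

noncomputable def stepL (σ : LState X Y) (p : X × Y) : LState X Y :=
  ⟨upd σ.G p.1 p.2,
    if p.2 ∈ predictS σ.G σ.C (σ.n - 1) p.1
      then σ.C ++ [(p.1, predictS σ.G σ.C (σ.n - 1) p.1)] else σ.C,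
    σ.n - 1⟩

noncomputable def stateOf (H : Set (X → Set Y)) (N : ℕ) (pre : List (X × Y)) : LState X Y :=
  pre.foldl stepL ⟨H, [], N⟩

noncomputable def learner (H : Set (X → Set Y)) (N : ℕ) : List (X × Y) → X → Set Y :=
  fun pre x =>
    predictS (stateOf H N pre).G (stateOf H N pre).C ((stateOf H N pre).n - 1) x

lemma stateOf_concat (H : Set (X → Set Y)) (N : ℕ) (pre : List (X × Y)) (p : X × Y) :
    stateOf H N (pre ++ [p]) = stepL (stateOf H N pre) p := by
  unfold stateOf
  rw [List.foldl_append]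
  rfl

lemma foldl_n (l : List (X × Y)) : ∀ σ : LState X Y,
    (l.foldl stepL σ).n = σ.n - l.length := by
  induction l with
  | nil => intro σ; simp
  | cons p rest ih =>
    intro σ
    rw [List.foldl_cons, ih]
    show σ.n - 1 - rest.length = σ.n - (p :: rest).length
    rw [List.length_cons]
    omega

lemma stateOf_n (H : Set (X → Set Y)) (N : ℕ) (pre : List (X × Y)) :
    (stateOf H N pre).n = N - pre.length :=
  foldl_n pre _

lemma foldl_G (l : List (X × Y)) : ∀ σ : LState X Y,
    (l.foldl stepL σ).G = {g ∈ σ.G | Compatible g l} := by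
  induction l with
  | nil =>
    intro σ
    simp only [List.foldl_nil]
    ext g
    simp [Compatible]
  | cons p rest ih =>
    intro σ
    rw [List.foldl_cons, ih]
    ext g
    simp only [Set.mem_setOf_eq]
    constructor
    · rintro ⟨⟨hg, hy⟩, hcomp⟩
      refine ⟨hg, ?_⟩
      intro q hq
      rcases List.mem_cons.1 hq with rfl | hq'
      · exact hy
      · exact hcomp q hq'
    · rintro ⟨hg, hcomp⟩
      exact ⟨⟨hg, hcomp p List.mem_cons_self⟩,
        fun q hq => hcomp q (List.mem_cons_of_mem p hq)⟩

lemma stateOf_G (H : Set (X → Set Y)) (N : ℕ) (pre : List (X × Y)) :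
    (stateOf H N pre).G = {g ∈ H | Compatible g pre} :=
  foldl_G pre _

lemma mistakesFrom_cons' (A : List (X × Y) → X → Set Y) (h : X → Set Y)
    (pre : List (X × Y)) (x : X) (y : Y) (rest : List (X × Y)) :
    mistakesFrom A h pre ((x, y) :: rest) =
      (if y ∉ A pre x ∨ ¬ A pre x ⊆ h x then 1 else 0) +
        mistakesFrom A h (pre ++ [(x, y)]) rest :=
  mistakesFrom_cons A h pre (x, y) rest

lemma analysis (H : Set (X → Set Y)) (N : ℕ) (x0 : X) (y0 : Y) :
    ∀ (suf pre : List (X × Y)) (h : X → Set Y), h ∈ H →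
      Compatible h (pre ++ suf) → (pre ++ suf).length = N →
      mistakesFrom (learner H N) h pre suf + pend h (stateOf H N pre).C ≤
        pot (stateOf H N pre).G (stateOf H N pre).C suf.length := by
  intro suf
  induction suf with
  | nil =>
    intro pre h hH hc hlen
    have hG : h ∈ (stateOf H N pre).G := by
      rw [stateOf_G]
      exact ⟨hH, by simpa using hc⟩
    simpa using pend_le_pot hG x0 y0 (stateOf H N pre).C 0
  | cons p rest ih =>
    intro pre h hH hc hlen
    obtain ⟨x, y⟩ := p
    have hlen' : pre.length + (rest.length + 1) = N := by
      simpa [List.length_append] using hlen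
    have hn1 : (stateOf H N pre).n - 1 = rest.length := by
      rw [stateOf_n]; omega
    set Gc := (stateOf H N pre).G with hGc
    set Cc := (stateOf H N pre).C with hCc
    set S := predictS Gc Cc rest.length x with hS
    have hSeq : predictS (stateOf H N pre).G (stateOf H N pre).C
        ((stateOf H N pre).n - 1) x = S := by
      rw [hn1, ← hGc, ← hCc]
    have hA : learner H N pre x = S := hSeq
    have hcomp_pre : Compatible h pre := fun q hq => hc q (List.mem_append_left _ hq)
    have hGh : h ∈ Gc := by rw [hGc, stateOf_G]; exact ⟨hH, hcomp_pre⟩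
    have hyh : y ∈ h x := hc (x, y) (by simp)
    have hstep := stateOf_concat H N pre (x, y)
    have hG' : (stateOf H N (pre ++ [(x, y)])).G = upd Gc x y := by
      rw [hstep]
      show upd (stateOf H N pre).G x y = upd Gc x y
      rw [← hGc]
    have hC' : (stateOf H N (pre ++ [(x, y)])).C =
        if y ∈ S then Cc ++ [(x, S)] else Cc := by
      rw [hstep]
      show (if y ∈ predictS (stateOf H N pre).G (stateOf H N pre).C
          ((stateOf H N pre).n - 1) x
        then (stateOf H N pre).C ++ [(x, predictS (stateOf H N pre).G (stateOf H N pre).C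
          ((stateOf H N pre).n - 1) x)]
        else (stateOf H N pre).C) = _
      rw [hSeq, ← hCc]
    have hclen : ((pre ++ [(x, y)]) ++ rest).length = N := by
      simp only [List.length_append, List.length_cons, List.length_nil]
      omega
    have hccomp : Compatible h ((pre ++ [(x, y)]) ++ rest) := by
      have heq : (pre ++ [(x, y)]) ++ rest = pre ++ ((x, y) :: rest) := by simp
      rw [heq]
      exact hc
    have iha := ih (pre ++ [(x, y)]) h hH hccomp hclen
    rw [hG'] at iha
    rw [mistakesFrom_cons', hA]
    simp only [List.length_cons]
    by_cases hyS : y ∈ S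
    · have hkey := key_lemma x0 y0 Gc Cc rest.length x
        (show y ∈ predictS Gc Cc rest.length x from hyS)
      rw [← hS] at hkey
      rw [hC', if_pos hyS] at iha
      have hpend : pend h (Cc ++ [(x, S)]) = pend h Cc + (if S ⊆ h x then 0 else 1) :=
        pend_concat h Cc (x, S)
      have hind : (if y ∉ S ∨ ¬ S ⊆ h x then 1 else 0) = (if S ⊆ h x then 0 else 1) := by
        by_cases hsub : S ⊆ h x
        · rw [if_pos hsub, if_neg]
          push_neg
          exact ⟨hyS, hsub⟩
        · rw [if_neg hsub, if_pos (Or.inr hsub)]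
      rw [hind]
      omega
    · rw [hC', if_neg hyS] at iha
      have hlt : pot (upd Gc x y) Cc rest.length < pot Gc Cc (rest.length + 1) := by
        by_contra hge
        push_neg at hge
        exact hyS ⟨⟨h, hGh, hyh⟩, hge⟩
      rw [if_pos (Or.inl hyS)]
      omega

end Learner
/-- the minimax deterministic mistake bound equals the depth-bounded
ambiguous Littlestone dimension: `M*_H(N) = AL(H, N)`. -/
theorem minimax_eq_ALn {X Y : Type} [Fintype Y] (H : Set (X → Set Y))
    (hne : H.Nonempty) (hval : ∀ h ∈ H, ∃ x : X, (h x).Nonempty) (N : ℕ) :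
    Mstar H N = ALn X Y H N := by
  obtain ⟨h1, hH1⟩ := hne
  obtain ⟨x0, hx0⟩ := hval h1 hH1
  obtain ⟨y0, hy0⟩ := hx0
  have hmem : ∃ A : List (X × Y) → X → Set Y, ∀ h ∈ H, ∀ xs : List (X × Y),
      Compatible h xs → xs.length = N → numMistakes A h xs ≤ pot H [] N := by
    refine ⟨learner H N, ?_⟩
    intro h hH xs hc hxs
    have hana := analysis H N x0 y0 xs [] h hH (by simpa using hc) (by simpa using hxs)
    rw [numMistakes_eq_mistakesFrom]
    have hst : stateOf H N ([] : List (X × Y)) = ⟨H, [], N⟩ := rfl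
    rw [hst] at hana
    simp only [pend_nil, add_zero] at hana
    rw [hxs] at hana
    exact hana
  have hALn : ALn X Y H N = pot H [] N := ALn_eq_pot N
  apply le_antisymm
  · rw [hALn]
    exact Nat.sInf_le hmem
  · have hnempty : {m : ℕ | ∃ A : List (X × Y) → X → Set Y, ∀ h ∈ H, ∀ xs : List (X × Y),
        Compatible h xs → xs.length = N → numMistakes A h xs ≤ m}.Nonempty :=
      ⟨pot H [] N, hmem⟩
    apply le_csInf hnempty
    rintro m ⟨A, hA⟩
    show ALn X Y H N ≤ m
    apply nat_sSup_le
    rintro r ⟨T, hd, rfl⟩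
    exact part1 hval A hA T hd
end

section
/- For randomized learners in ambiguous online learning, the minimax expected number of mistakes satisfies EM*_H(N) ≥ AL(H, N) / (VC(Λ(H)) + 1). -/
/-- A `Y`-lattice: a family of subsets of `Y` containing `Y` itself and closed
under binary intersections. -/
def IsYLattice {Y : Type} (L : Set (Set Y)) : Prop :=
  Set.univ ∈ L ∧ ∀ A ∈ L, ∀ B ∈ L, A ∩ B ∈ L

/-- The `Λ`-hull of `A`: the intersection of all members of `Λ` containing `A`. -/
def latHull {Y : Type} (L : Set (Set Y)) (A : Set Y) : Set Y :=
  ⋂₀ {B | B ∈ L ∧ A ⊆ B}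

/-- The `Λ`-complexity of `A`: minimal cardinality of `B ⊆ A` with `A ⊆ hull(B)`. -/
noncomputable def latComplexity {Y : Type} (L : Set (Set Y)) (A : Set Y) : ℕ :=
  sInf {n : ℕ | ∃ B : Set Y, B ⊆ A ∧ B.ncard = n ∧ A ⊆ latHull L B}

/-- The pivot dimension of `Λ`: maximal `Λ`-complexity of an element of `Λ`. -/
noncomputable def PDim {Y : Type} (L : Set (Set Y)) : ℕ :=
  sSup {n : ℕ | ∃ A ∈ L, n = latComplexity L A}

/-- `Λ` shatters `S` if every subset of `S` is a trace `S ∩ C` for some `C ∈ Λ`. -/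
def Shatters {Y : Type} (L : Set (Set Y)) (S : Set Y) : Prop :=
  ∀ B ⊆ S, ∃ C ∈ L, S ∩ C = B

/-- VC dimension of the family `Λ`. -/
noncomputable def VCdim {Y : Type} (L : Set (Set Y)) : ℕ :=
  sSup {n : ℕ | ∃ S : Set Y, Shatters L S ∧ S.ncard = n}

/-- `Λ(H)`: the minimal `Y`-lattice containing every value `h x` for `h ∈ H`. -/
def LamH {X Y : Type} (H : Set (X → Set Y)) : Set (Set Y) :=
  {A | ∀ L : Set (Set Y), IsYLattice L → (∀ h ∈ H, ∀ x : X, h x ∈ L) → A ∈ L}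

/-- Expected number of mistakes of a randomized learner `R` on trace `xs` relative
to hypothesis `h`: the sum over rounds of the probability of a mistake. -/
noncomputable def expMistakes {X Y : Type} (R : List (X × Y) → X → PMF (Set Y))
    (h : X → Set Y) (xs : List (X × Y)) : ℝ :=
  ∑ k : Fin xs.length,
    ((R (xs.take k.1) (xs.get k).1).toOuterMeasure
      {α : Set Y | (xs.get k).2 ∉ α ∨ ¬ α ⊆ h (xs.get k).1}).toReal


/-! ### Auxiliary development for the randomized lower bound -/

namespace RLB

open RTree

/-! #### RTree lemmas -/

lemma iterate_root (t : RTree) (k : ℕ) : t.parent^[k] t.root = t.root :=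
  Function.iterate_fixed t.parent_root k

lemma anc_antisymm (t : RTree) {a b : t.V} (hab : t.Anc a b) (hba : t.Anc b a) : a = b := by
  obtain ⟨i, hi⟩ := hab   -- parent^[i] b = a
  obtain ⟨j, hj⟩ := hba   -- parent^[j] a = b
  rcases Nat.eq_zero_or_pos (i + j) with h0 | hpos
  · have hi0 : i = 0 := by omega
    subst hi0; simpa using hi.symm
  · -- a is periodic with period i + j ≥ 1, and reaches root, hence a = root
    have hper : t.parent^[i + j] a = a := by
      rw [Function.iterate_add_apply, hj, hi]
    obtain ⟨k, hk⟩ := t.reaches a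
    have hfix : t.parent^[(i + j) * k] a = a := by
      rw [Function.iterate_mul]
      exact Function.iterate_fixed hper k
    have hroot : t.parent^[(i + j) * k] a = t.root := by
      have hle : k ≤ (i + j) * k := Nat.le_mul_of_pos_left k hpos
      have : (i + j) * k = ((i + j) * k - k) + k := by omega
      rw [this, Function.iterate_add_apply, hk, iterate_root]
    have haroot : a = t.root := by rw [← hfix, hroot]
    have hbroot : b = t.root := by rw [← hj, haroot, iterate_root]
    rw [haroot, hbroot]

lemma anc_refl (t : RTree) (a : t.V) : t.Anc a a := ⟨0, rfl⟩

lemma anc_root (t : RTree) (a : t.V) : t.Anc t.root a := t.reaches a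

lemma anc_of_parent (t : RTree) {c v u : t.V} (hcv : t.parent c = v) (h : t.Anc c u) :
    t.Anc v u := by
  obtain ⟨k, hk⟩ := h
  exact ⟨k + 1, by rw [Function.iterate_succ_apply', hk, hcv]⟩

lemma anc_total (t : RTree) {a b u : t.V} (ha : t.Anc a u) (hb : t.Anc b u) :
    t.Anc a b ∨ t.Anc b a := by
  obtain ⟨i, hi⟩ := ha
  obtain ⟨j, hj⟩ := hb
  rcases le_total i j with hle | hle
  · right
    refine ⟨j - i, ?_⟩
    have : j = (j - i) + i := by omega
    rw [← hi, ← Function.iterate_add_apply, ← this, hj]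
  · left
    refine ⟨i - j, ?_⟩
    have : i = (i - j) + j := by omega
    rw [← hj, ← Function.iterate_add_apply, ← this, hi]

lemma depthOf_spec (t : RTree) (v : t.V) : t.parent^[t.depthOf v] v = t.root :=
  Nat.sInf_mem (t.reaches v)

lemma depthOf_root (t : RTree) : t.depthOf t.root = 0 :=
  Nat.sInf_eq_zero.mpr (Or.inl rfl)

lemma depthOf_le_depth (t : RTree) (v : t.V) : t.depthOf v ≤ t.depth := by
  haveI := t.fin
  have hs : {n : ℕ | ∃ v : t.V, n = t.depthOf v} = Set.range t.depthOf := by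
    ext n; simp [Set.range, eq_comm]
  refine le_csSup ?_ ⟨v, rfl⟩
  rw [hs]
  exact (Set.finite_range _).bddAbove

lemma depthOf_child (t : RTree) {c v : t.V} (hc : t.parent c = v) (hcr : c ≠ t.root) :
    t.depthOf c = t.depthOf v + 1 := by
  apply le_antisymm
  · apply Nat.sInf_le
    show t.parent^[t.depthOf v + 1] c = t.root
    rw [Function.iterate_succ_apply, hc]
    exact depthOf_spec t v
  · have h2 := depthOf_spec t c
    rcases Nat.eq_zero_or_eq_succ_pred (t.depthOf c) with h0 | hsucc
    · exfalso; apply hcr; rw [← h2, h0]; rfl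
    · rw [hsucc] at h2 ⊢
      rw [Function.iterate_succ_apply, hc] at h2
      have : t.depthOf v ≤ t.depthOf c - 1 := Nat.sInf_le h2
      omega

lemma exists_leaf (t : RTree) : ∃ v : t.V, t.IsLeaf v := by
  haveI := t.fin
  obtain ⟨v, -, hv⟩ := Finset.exists_max_image (Finset.univ : Finset t.V) t.depthOf
    ⟨t.root, Finset.mem_univ _⟩
  refine ⟨v, ?_⟩
  rw [RTree.IsLeaf, Set.eq_empty_iff_forall_notMem]
  rintro w ⟨hp, hw⟩
  have h1 := depthOf_child t hp hw
  have h2 := hv w (Finset.mem_univ w)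
  omega

/-! #### PMF lemmas -/

lemma pmf_le_one {β : Type} (p : PMF β) (E : Set β) : p.toOuterMeasure E ≤ 1 := by
  rw [PMF.toOuterMeasure_apply]
  calc ∑' x, E.indicator p x ≤ ∑' x, p x :=
        ENNReal.tsum_le_tsum (fun x => Set.indicator_le_self' (fun _ _ => zero_le) x)
    _ = 1 := p.tsum_coe

lemma pmf_ne_top {β : Type} (p : PMF β) (E : Set β) : p.toOuterMeasure E ≠ ⊤ :=
  ne_top_of_le_ne_top ENNReal.one_ne_top (pmf_le_one p E)

lemma pmf_toReal_le_one {β : Type} (p : PMF β) (E : Set β) :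
    (p.toOuterMeasure E).toReal ≤ 1 := by
  have := pmf_le_one p E
  simpa using ENNReal.toReal_mono ENNReal.one_ne_top this

lemma pmf_mono {β : Type} (p : PMF β) {E F : Set β} (h : E ⊆ F) :
    (p.toOuterMeasure E).toReal ≤ (p.toOuterMeasure F).toReal :=
  ENNReal.toReal_mono (pmf_ne_top p F) (p.toOuterMeasure.mono h)

lemma pmf_compl {β : Type} (p : PMF β) (E : Set β) :
    (p.toOuterMeasure Eᶜ).toReal = 1 - (p.toOuterMeasure E).toReal := by
  have hadd : p.toOuterMeasure E + p.toOuterMeasure Eᶜ = 1 := by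
    rw [PMF.toOuterMeasure_apply, PMF.toOuterMeasure_apply, ← ENNReal.tsum_add, ← p.tsum_coe]
    apply tsum_congr
    intro x
    by_cases hx : x ∈ E <;> simp [Set.indicator, hx]
  have := congrArg ENNReal.toReal hadd
  rw [ENNReal.toReal_add (pmf_ne_top p E) (pmf_ne_top p Eᶜ)] at this
  simp at this
  linarith

/-! #### Lattice lemmas -/

lemma lamH_isLattice {X Y : Type} (H : Set (X → Set Y)) : IsYLattice (LamH H) := by
  constructor
  · intro L hL _; exact hL.1
  · intro A hA B hB L hL hv
    exact hL.2 A (hA L hL hv) B (hB L hL hv)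

lemma val_mem_lamH {X Y : Type} {H : Set (X → Set Y)} {h : X → Set Y} (hh : h ∈ H) (x : X) :
    h x ∈ LamH H := fun _ _ hv => hv h hh x

lemma subset_hull {Y : Type} (L : Set (Set Y)) (B : Set Y) : B ⊆ latHull L B :=
  Set.subset_sInter (fun _ hC => hC.2)

lemma hull_subset {Y : Type} (L : Set (Set Y)) {B C : Set Y} (hC : C ∈ L) (hBC : B ⊆ C) :
    latHull L B ⊆ C := Set.sInter_subset_of_mem ⟨hC, hBC⟩

lemma hull_mono {Y : Type} (L : Set (Set Y)) {A B : Set Y} (h : A ⊆ B) :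
    latHull L A ⊆ latHull L B :=
  Set.sInter_subset_sInter (fun _ hC => ⟨hC.1, h.trans hC.2⟩)

lemma sInter_mem {Y : Type} [Fintype Y] {L : Set (Set Y)} (hL : IsYLattice L)
    {S : Set (Set Y)} (hS : S ⊆ L) : ⋂₀ S ∈ L := by
  refine Set.Finite.induction_on_subset (motive := fun s _ => ⋂₀ s ∈ L) S (Set.toFinite S) ?_ ?_
  · simpa using hL.1
  · intro a s haS _ _ ih
    rw [Set.sInter_insert]
    exact hL.2 a (hS haS) _ ih

lemma hull_mem {Y : Type} [Fintype Y] {L : Set (Set Y)} (hL : IsYLattice L) (B : Set Y) :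
    latHull L B ∈ L := sInter_mem hL (fun _ hC => hC.1)

/-- The pivot lemma: every set `P` has a subset `B` of size at most `VCdim L`
whose hull contains `P`. -/
lemma pivot {Y : Type} [Fintype Y] {L : Set (Set Y)} (hL : IsYLattice L) (P : Set Y) :
    ∃ B : Set Y, B ⊆ P ∧ P ⊆ latHull L B ∧ B.ncard ≤ VCdim L := by
  set T := {n : ℕ | ∃ B : Set Y, B ⊆ P ∧ B.ncard = n ∧ P ⊆ latHull L B} with hT
  have hTne : T.Nonempty := ⟨P.ncard, P, subset_rfl, rfl, subset_hull L P⟩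
  obtain ⟨B, hBP, hBcard, hBhull⟩ := Nat.sInf_mem hTne
  refine ⟨B, hBP, hBhull, ?_⟩
  have hBfin : B.Finite := Set.toFinite B
  have hshat : Shatters L B := by
    intro B' hB'
    refine ⟨latHull L B', hull_mem hL B', ?_⟩
    apply Set.Subset.antisymm
    · rintro b ⟨hbB, hbH⟩
      by_contra hbB'
      have hsub : B' ⊆ B \ {b} := fun c hc => ⟨hB' hc, fun he => hbB' (he ▸ hc)⟩
      have h1 : B ⊆ latHull L (B \ {b}) := by
        intro c hc
        by_cases hcb : c = b
        · subst hcb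
          exact hull_mono L hsub hbH
        · exact subset_hull L _ ⟨hc, hcb⟩
      have hkey : P ⊆ latHull L (B \ {b}) :=
        hBhull.trans (hull_subset L (hull_mem hL _) h1)
      have hmem : (B \ {b}).ncard ∈ T := ⟨B \ {b}, Set.diff_subset.trans hBP, rfl, hkey⟩
      have hlt : (B \ {b}).ncard < B.ncard := Set.ncard_diff_singleton_lt_of_mem hbB hBfin
      have hle := Nat.sInf_le hmem
      omega
    · intro b hb
      exact ⟨hB' hb, subset_hull L B' hb⟩
  have hbdd : BddAbove {n : ℕ | ∃ S : Set Y, Shatters L S ∧ S.ncard = n} := by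
    refine ⟨Fintype.card Y, ?_⟩
    rintro n ⟨S, -, rfl⟩
    calc S.ncard ≤ (Set.univ : Set Y).ncard :=
          Set.ncard_le_ncard (Set.subset_univ S) (Set.toFinite _)
      _ = Fintype.card Y := by rw [Set.ncard_univ, Nat.card_eq_fintype_card]
  exact le_csSup hbdd ⟨B, hshat, rfl⟩

/-! #### Expected-mistake prefix sums -/

/-- Expected mistakes of `R` on continuation `ys` after history `pre`. -/
noncomputable def expFrom {X Y : Type} (R : List (X × Y) → X → PMF (Set Y))
    (h : X → Set Y) : List (X × Y) → List (X × Y) → ℝ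
  | _, [] => 0
  | pre, p :: ys =>
      ((R pre p.1).toOuterMeasure {α : Set Y | p.2 ∉ α ∨ ¬ α ⊆ h p.1}).toReal +
        expFrom R h (pre ++ [p]) ys

lemma expFrom_nonneg {X Y : Type} (R : List (X × Y) → X → PMF (Set Y)) (h : X → Set Y)
    (pre ys : List (X × Y)) : 0 ≤ expFrom R h pre ys := by
  induction ys generalizing pre with
  | nil => simp [expFrom]
  | cons p ys ih =>
    rw [expFrom]
    have := ih (pre ++ [p])
    have h0 : (0:ℝ) ≤ ((R pre p.1).toOuterMeasure
        {α : Set Y | p.2 ∉ α ∨ ¬ α ⊆ h p.1}).toReal := ENNReal.toReal_nonneg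
    linarith

lemma expFrom_append {X Y : Type} (R : List (X × Y) → X → PMF (Set Y)) (h : X → Set Y)
    (pre l1 l2 : List (X × Y)) :
    expFrom R h pre (l1 ++ l2) = expFrom R h pre l1 + expFrom R h (pre ++ l1) l2 := by
  induction l1 generalizing pre with
  | nil => simp [expFrom]
  | cons p l1 ih =>
    rw [List.cons_append, expFrom, expFrom, ih]
    have : pre ++ p :: l1 = (pre ++ [p]) ++ l1 := by simp
    rw [this]
    ring

lemma sum_eq_expFrom {X Y : Type} (R : List (X × Y) → X → PMF (Set Y)) (h : X → Set Y) :
    ∀ (ys pre : List (X × Y)),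
      (∑ k : Fin ys.length,
        ((R (pre ++ ys.take k.1) (ys.get k).1).toOuterMeasure
          {α : Set Y | (ys.get k).2 ∉ α ∨ ¬ α ⊆ h (ys.get k).1}).toReal) =
      expFrom R h pre ys := by
  intro ys
  induction ys with
  | nil => intro pre; simp [expFrom]
  | cons p ys ih =>
    intro pre
    rw [expFrom, ← ih (pre ++ [p])]
    erw [Fin.sum_univ_succ]
    congr 1
    · simp
    · apply Finset.sum_congr rfl
      intro k _
      simp [List.append_assoc]

lemma expMistakes_eq_expFrom {X Y : Type} (R : List (X × Y) → X → PMF (Set Y))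
    (h : X → Set Y) (xs : List (X × Y)) : expMistakes R h xs = expFrom R h [] xs := by
  rw [expMistakes, ← sum_eq_expFrom R h xs []]
  simp

/-! #### Tree walk lemmas -/

lemma relSet_self_empty {X Y : Type} {H : Set (X → Set Y)} (T : AmbTree X Y H) (v : T.t.V) :
    {a : T.t.V | T.Relevant a v ∧ T.t.Anc v a ∧ a ≠ v} = ∅ := by
  rw [Set.eq_empty_iff_forall_notMem]
  rintro a ⟨hrel, hva, hav⟩
  exact hav (anc_antisymm T.t hrel.2.1 hva)

lemma relSet_step {X Y : Type} {H : Set (X → Set Y)} (T : AmbTree X Y H) {v c u : T.t.V}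
    (hc : c ∈ T.t.children v) (hanc : T.t.Anc c u) :
    ∀ a ∈ {a : T.t.V | T.Relevant a u ∧ T.t.Anc v a ∧ a ≠ v},
      a = c ∨ a ∈ {a : T.t.V | T.Relevant a u ∧ T.t.Anc c a ∧ a ≠ c} := by
  rintro a ⟨hrel, hva, hav⟩
  by_cases hac : a = c
  · exact Or.inl hac
  · refine Or.inr ⟨hrel, ?_, hac⟩
    rcases anc_total T.t hrel.2.1 hanc with h | h
    · exfalso
      obtain ⟨k, hk⟩ := h
      cases k with
      | zero => exact hac hk.symm
      | succ k =>
        rw [Function.iterate_succ_apply, hc.1] at hk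
        exact hav (anc_antisymm T.t ⟨k, hk⟩ hva)
    · exact h

/-- Target property of the adversarial walk. -/
def WalkOut {X Y : Type} {H : Set (X → Set Y)} (T : AmbTree X Y H)
    (R : List (X × Y) → X → PMF (Set Y)) (v : T.t.V) (pre : List (X × Y)) : Prop :=
  ∃ u : T.t.V, ∃ ys : List (X × Y), T.t.IsLeaf u ∧ T.t.Anc v u ∧
    T.t.depthOf v + ys.length = T.t.depthOf u ∧
    (∀ p ∈ ys, p.2 ∈ T.hlab u p.1) ∧
    ({a : T.t.V | T.Relevant a u ∧ T.t.Anc v a ∧ a ≠ v}.ncard : ℝ) ≤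
      ((VCdim (LamH H) : ℝ) + 1) * expFrom R (T.hlab u) pre ys

lemma walk_leaf {X Y : Type} {H : Set (X → Set Y)} (T : AmbTree X Y H)
    (R : List (X × Y) → X → PMF (Set Y)) (v : T.t.V) (pre : List (X × Y))
    (hleaf : T.t.IsLeaf v) : WalkOut T R v pre := by
  refine ⟨v, [], hleaf, anc_refl T.t v, by simp, by simp, ?_⟩
  rw [relSet_self_empty T v]
  simp [expFrom]

lemma walk {X Y : Type} [Fintype Y] {H : Set (X → Set Y)} (T : AmbTree X Y H)
    (R : List (X × Y) → X → PMF (Set Y)) :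
    ∀ (fuel : ℕ) (v : T.t.V) (pre : List (X × Y)),
      T.t.depth ≤ T.t.depthOf v + fuel → WalkOut T R v pre := by
  intro fuel
  induction fuel with
  | zero =>
    intro v pre hd
    apply walk_leaf
    by_contra hnl
    obtain ⟨w, hw⟩ := Set.nonempty_iff_ne_empty.mpr hnl
    have h1 := depthOf_child T.t hw.1 hw.2
    have h2 := depthOf_le_depth T.t w
    omega
  | succ fuel ih =>
    intro v pre hd
    by_cases hleaf : T.t.IsLeaf v
    · exact walk_leaf T R v pre hleaf
    have hne : (T.t.children v).Nonempty := Set.nonempty_iff_ne_empty.mpr hleaf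
    obtain ⟨a0, ha0, ha0u⟩ := T.e0_unique v hne
    obtain ⟨⟨ha0p, ha0r⟩, ha0E⟩ := ha0
    set d := VCdim (LamH H) with hd_def
    set Pset := T.ylab '' (T.t.children v \ {a0}) with hPset_def
    obtain ⟨B, hBP, hPhull, hBd⟩ := pivot (lamH_isLattice H) Pset
    have hd1 : (0:ℝ) < (d:ℝ) + 1 := by positivity
    -- choose the child and establish the per-round guarantee
    have hchoice : ∃ c ∈ T.t.children v, ∀ u : T.t.V, T.t.IsLeaf u → T.t.Anc c u →
        T.Relevant c u → (1:ℝ) ≤ ((d:ℝ) + 1) *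
          ((R pre (T.xlab v)).toOuterMeasure
            {α : Set Y | T.ylab c ∉ α ∨ ¬ α ⊆ T.hlab u (T.xlab v)}).toReal := by
      by_cases hcase : ∃ y ∈ B, ((R pre (T.xlab v)).toOuterMeasure
          {α : Set Y | y ∈ α}).toReal ≤ (d:ℝ) / ((d:ℝ) + 1)
      · obtain ⟨y, hyB, hyle⟩ := hcase
        obtain ⟨b, hbmem, hby⟩ := hBP hyB
        refine ⟨b, hbmem.1, ?_⟩
        intro u hu hanc _
        have hsub : {α : Set Y | y ∈ α}ᶜ ⊆
            {α : Set Y | T.ylab b ∉ α ∨ ¬ α ⊆ T.hlab u (T.xlab v)} := by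
          intro s hs
          exact Or.inl (by rwa [hby])
        have h1 := pmf_mono (R pre (T.xlab v)) hsub
        rw [pmf_compl] at h1
        have harith : ((d:ℝ) + 1) * (1 - (d:ℝ)/((d:ℝ)+1)) = 1 := by field_simp; ring
        nlinarith [h1, hyle, hd1]
      · push_neg at hcase
        refine ⟨a0, ⟨ha0p, ha0r⟩, ?_⟩
        intro u hu hanc hrel
        rcases hrel.2.2 with hE | ⟨b', hb'p, hb'r, hb'n⟩
        · exact absurd ha0E hE
        · rw [ha0p] at hb'p
          have hb'a0 : b' ≠ a0 := by
            intro he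
            rw [he] at hb'n
            exact hb'n (T.path_mem u a0 hu hrel.2.1 ha0r)
          rw [ha0p] at hb'n
          have hyP : T.ylab b' ∈ Pset := ⟨b', ⟨⟨hb'p, hb'r⟩, hb'a0⟩, rfl⟩
          have hF : T.hlab u (T.xlab v) ∈ LamH H := val_mem_lamH (T.hlab_mem u hu) _
          have hex : ∃ y ∈ B, y ∉ T.hlab u (T.xlab v) := by
            by_contra hco
            push_neg at hco
            exact hb'n (hull_subset _ hF hco (hPhull hyP))
          obtain ⟨y, hyB, hyF⟩ := hex
          have hgt := hcase y hyB
          have hsub : {α : Set Y | y ∈ α} ⊆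
              {α : Set Y | T.ylab a0 ∉ α ∨ ¬ α ⊆ T.hlab u (T.xlab v)} :=
            fun s hs => Or.inr (fun hss => hyF (hss hs))
          have h1 := pmf_mono (R pre (T.xlab v)) hsub
          have hdge : 1 ≤ d := by
            have hpos := (Set.ncard_pos (Set.toFinite B)).mpr ⟨y, hyB⟩
            omega
          have hdge' : (1:ℝ) ≤ (d:ℝ) := by exact_mod_cast hdge
          have harith : ((d:ℝ) + 1) * ((d:ℝ)/((d:ℝ)+1)) = (d:ℝ) := by field_simp
          nlinarith [h1, hgt, hd1, hdge']
    obtain ⟨c, hc, hG⟩ := hchoice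
    have hdc : T.t.depthOf c = T.t.depthOf v + 1 := depthOf_child T.t hc.1 hc.2
    obtain ⟨u, ys', hu, hanc, hlen, hcomp, hbound⟩ :=
      ih c (pre ++ [(T.xlab v, T.ylab c)]) (by omega)
    refine ⟨u, (T.xlab v, T.ylab c) :: ys', hu, anc_of_parent T.t hc.1 hanc, ?_, ?_, ?_⟩
    · simp only [List.length_cons]; omega
    · intro p hp
      rcases List.mem_cons.mp hp with he | hm
      · rw [he]
        have := T.path_mem u c hu hanc hc.2
        rwa [hc.1] at this
      · exact hcomp p hm
    · haveI := T.t.fin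
      simp only [expFrom]
      set term := ((R pre (T.xlab v)).toOuterMeasure
        {α : Set Y | T.ylab c ∉ α ∨ ¬ α ⊆ T.hlab u (T.xlab v)}).toReal with hterm_def
      set E' := expFrom R (T.hlab u) (pre ++ [(T.xlab v, T.ylab c)]) ys' with hE'_def
      have hterm0 : (0:ℝ) ≤ term := ENNReal.toReal_nonneg
      have hsub := relSet_step T hc hanc
      rw [mul_add]
      by_cases hrel : T.Relevant c u
      · have hss : {a : T.t.V | T.Relevant a u ∧ T.t.Anc v a ∧ a ≠ v} ⊆
            insert c {a : T.t.V | T.Relevant a u ∧ T.t.Anc c a ∧ a ≠ c} := by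
          intro a ha
          rcases hsub a ha with h | h
          · rw [h]; exact Set.mem_insert c _
          · exact Set.mem_insert_of_mem c h
        have h1 : ({a : T.t.V | T.Relevant a u ∧ T.t.Anc v a ∧ a ≠ v}.ncard : ℝ) ≤
            ({a : T.t.V | T.Relevant a u ∧ T.t.Anc c a ∧ a ≠ c}.ncard : ℝ) + 1 := by
          have := le_trans (Set.ncard_le_ncard hss (Set.toFinite _))
            (Set.ncard_insert_le c _)
          exact_mod_cast this
        have hG' := hG u hu hanc hrel
        linarith [hbound]
      · have hss : {a : T.t.V | T.Relevant a u ∧ T.t.Anc v a ∧ a ≠ v} ⊆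
            {a : T.t.V | T.Relevant a u ∧ T.t.Anc c a ∧ a ≠ c} := by
          intro a ha
          rcases hsub a ha with h | h
          · exact absurd (h ▸ ha).1 hrel
          · exact h
        have h1 : ({a : T.t.V | T.Relevant a u ∧ T.t.Anc v a ∧ a ≠ v}.ncard : ℝ) ≤
            ({a : T.t.V | T.Relevant a u ∧ T.t.Anc c a ∧ a ≠ c}.ncard : ℝ) := by
          exact_mod_cast Set.ncard_le_ncard hss (Set.toFinite _)
        have hmul : (0:ℝ) ≤ ((d:ℝ) + 1) * term := mul_nonneg (le_of_lt hd1) hterm0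
        linarith [hbound]

lemma relCount_le_depthOf {X Y : Type} {H : Set (X → Set Y)} (T : AmbTree X Y H)
    (u : T.t.V) : T.relCount u ≤ T.t.depthOf u := by
  haveI := T.t.fin
  classical
  have hsub : {a : T.t.V | T.Relevant a u} ⊆
      ↑((Finset.range (T.t.depthOf u)).image (fun k => T.t.parent^[k] u)) := by
    rintro a ⟨haroot, ⟨k0, hk0⟩, -⟩
    have hne : {k : ℕ | T.t.parent^[k] u = a}.Nonempty := ⟨k0, hk0⟩
    have hk := Nat.sInf_mem hne
    set k := sInf {k : ℕ | T.t.parent^[k] u = a} with hk_def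
    have hklt : k < T.t.depthOf u := by
      by_contra hge
      push_neg at hge
      apply haroot
      have hsplit : k = (k - T.t.depthOf u) + T.t.depthOf u := by omega
      rw [← hk, hsplit, Function.iterate_add_apply, depthOf_spec, iterate_root]
    simp only [Finset.coe_image, Finset.coe_range, Set.mem_image, Set.mem_Iio]
    exact ⟨k, hklt, hk⟩
  calc T.relCount u ≤ _ := Set.ncard_le_ncard hsub (Finset.finite_toSet _)
    _ = _ := Set.ncard_coe_finset _
    _ ≤ (Finset.range (T.t.depthOf u)).card := Finset.card_image_le
    _ = T.t.depthOf u := Finset.card_range _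

lemma rank_le_depth {X Y : Type} {H : Set (X → Set Y)} (T : AmbTree X Y H) :
    T.rank ≤ T.depth := by
  obtain ⟨u, hu⟩ := exists_leaf T.t
  calc T.rank ≤ T.relCount u := Nat.sInf_le ⟨u, hu, rfl⟩
    _ ≤ T.t.depthOf u := relCount_le_depthOf T u
    _ ≤ T.depth := depthOf_le_depth T.t u

end RLB







/-- the minimax expected number of mistakes of randomized learners is
at least `AL(H, N) / (VC(Λ(H)) + 1)`: every randomized learner suffers at least this
expected number of mistakes on some hypothesis and compatible length-`N` trace. -/
theorem randomized_lower_bound {X Y : Type} [Fintype Y] (H : Set (X → Set Y))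
    (hne : H.Nonempty) (hval : ∀ h ∈ H, ∃ x : X, (h x).Nonempty) (N : ℕ)
    (R : List (X × Y) → X → PMF (Set Y)) :
    ∃ h ∈ H, ∃ xs : List (X × Y), Compatible h xs ∧ xs.length = N ∧
      (ALn X Y H N : ℝ) / ((VCdim (LamH H) : ℝ) + 1) ≤ expMistakes R h xs := by
  classical
  obtain ⟨h0, hh0⟩ := hne
  set d := VCdim (LamH H) with hd_def
  have hd1 : (0:ℝ) < (d:ℝ) + 1 := by positivity
  by_cases hA : {r : ℕ | ∃ T : AmbTree X Y H, T.depth ≤ N ∧ r = T.rank}.Nonempty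
  · have hbdd : BddAbove {r : ℕ | ∃ T : AmbTree X Y H, T.depth ≤ N ∧ r = T.rank} := by
      refine ⟨N, ?_⟩
      rintro r ⟨T, hTd, rfl⟩
      exact le_trans (RLB.rank_le_depth T) hTd
    obtain ⟨T, hTd, hTr⟩ := Nat.sSup_mem hA hbdd
    haveI := T.t.fin
    have hTd' : T.t.depth ≤ N := hTd
    obtain ⟨u, ys, hu, -, hlen, hcomp, hbound⟩ :=
      RLB.walk T R N T.t.root [] (by rw [RLB.depthOf_root]; omega)
    set h := T.hlab u with hh_def
    have hhH : h ∈ H := T.hlab_mem u hu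
    obtain ⟨x0, y0, hy0⟩ := hval h hhH
    have hyslen : ys.length ≤ N := by
      have h1 := RLB.depthOf_le_depth T.t u
      have h2 := RLB.depthOf_root T.t
      omega
    refine ⟨h, hhH, ys ++ List.replicate (N - ys.length) (x0, y0), ?_, ?_, ?_⟩
    · intro p hp
      rcases List.mem_append.mp hp with h1 | h2
      · exact hcomp p h1
      · rw [List.eq_of_mem_replicate h2]; exact hy0
    · rw [List.length_append, List.length_replicate]; omega
    · rw [RLB.expMistakes_eq_expFrom, RLB.expFrom_append]
      have hEpad : 0 ≤ RLB.expFrom R h ([] ++ ys)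
          (List.replicate (N - ys.length) (x0, y0)) := RLB.expFrom_nonneg _ _ _ _
      have hALn : ALn X Y H N ≤ T.relCount u := by
        have h1 : ALn X Y H N = T.rank := hTr
        rw [h1]
        exact Nat.sInf_le ⟨u, hu, rfl⟩
      have hset : {a : T.t.V | T.Relevant a u ∧ T.t.Anc T.t.root a ∧ a ≠ T.t.root}
          = {a : T.t.V | T.Relevant a u} := by
        ext a
        constructor
        · rintro ⟨hr, -, -⟩; exact hr
        · intro hr; exact ⟨hr, T.t.reaches a, hr.1⟩
      rw [hset] at hbound
      rw [div_le_iff₀ hd1]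
      have hcast : (ALn X Y H N : ℝ) ≤ (T.relCount u : ℝ) := by exact_mod_cast hALn
      have hb2 : ((T.relCount u : ℕ) : ℝ) ≤ ((d:ℝ) + 1) * RLB.expFrom R h [] ys := by
        rw [AmbTree.relCount]; exact hbound
      have hmul : 0 ≤ ((d:ℝ) + 1) * RLB.expFrom R h ([] ++ ys)
          (List.replicate (N - ys.length) (x0, y0)) := mul_nonneg (le_of_lt hd1) hEpad
      nlinarith [hcast, hb2]
  · obtain ⟨x0, y0, hy0⟩ := hval h0 hh0
    refine ⟨h0, hh0, List.replicate N (x0, y0), ?_, by simp, ?_⟩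
    · intro p hp; rw [List.eq_of_mem_replicate hp]; exact hy0
    · have hz : ALn X Y H N = 0 := by
        have : {r : ℕ | ∃ T : AmbTree X Y H, T.depth ≤ N ∧ r = T.rank} = ∅ :=
          Set.not_nonempty_iff_eq_empty.mp hA
        show sSup {r : ℕ | ∃ T : AmbTree X Y H, T.depth ≤ N ∧ r = T.rank} = 0
        rw [this]
        simp [sSup, Nat.sSup_def]
      rw [hz, Nat.cast_zero, zero_div, RLB.expMistakes_eq_expFrom]
      exact RLB.expFrom_nonneg _ _ _ _
end

section
/- Reduction lemma from apple tasting to ambiguous online learning: for any apple tasting hypothesis h : X → {0,1}, any horizon N, and any ambiguous learner A : (X×{0,1})* × X → 2^{{0,1}}, the apple tasting learner A^ap defined by A^ap(trace, x) := 1 iff 0 ∉ A(trace, x) satisfies PM^{A^ap}_h(N) ≤ M^A_{h^am}(N), where h^am(x) := {h(x)} ∪ {1}. -/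
/-- An apple-tasting interaction sequence consistent with hypothesis `h` and
learner `A'`: when the learner predicts `0` (false) the feedback is `1` (true),
and when it predicts `1` the feedback is the true label `h x`. -/
def AppleCompatible {X : Type} (A' : List (X × Bool) → X → Bool) (h : X → Bool)
    (xs : List (X × Bool)) : Prop :=
  ∀ k : Fin xs.length,
    (xs.get k).2 = (if A' (xs.take k.1) (xs.get k).1 then h (xs.get k).1 else true)

/-- Number of apple-tasting mistakes: rounds where the prediction differs from the
true label. -/
noncomputable def apMistakes {X : Type} (A' : List (X × Bool) → X → Bool)
    (h : X → Bool) (xs : List (X × Bool)) : ℕ :=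
  {k : ℕ | ∃ hk : k < xs.length,
    A' (xs.take k) (xs.get ⟨k, hk⟩).1 ≠ h (xs.get ⟨k, hk⟩).1}.ncard

/-- The ambiguous hypothesis `h^am` associated with an apple-tasting hypothesis:
`h^am(x) = {h(x)} ∪ {1}`. -/
def ham {X : Type} (h : X → Bool) : X → Set Bool := fun x => {h x, true}

open Classical

/-- The apple-tasting learner induced by an ambiguous learner:
predict `1` iff `0 ∉ A(trace, x)`. -/
noncomputable def aap {X : Type} (A : List (X × Bool) → X → Set Bool) :
    List (X × Bool) → X → Bool := fun hist x =>
  if false ∈ A hist x then false else true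

/-- reduction from apple tasting to ambiguous online learning:
`PM^{A^ap}_h(N) ≤ M^A_{h^am}(N)`, i.e. the worst-case number of apple-tasting
mistakes of `A^ap` over length-`N` interactions consistent with `h` is at most the
worst-case number of ambiguous mistakes of `A` over length-`N` traces compatible
with `h^am`. -/
theorem apple_tasting_reduction {X : Type} (A : List (X × Bool) → X → Set Bool)
    (h : X → Bool) (N : ℕ) :
    sSup {m : ℕ | ∃ xs : List (X × Bool), xs.length = N ∧
        AppleCompatible (aap A) h xs ∧ m = apMistakes (aap A) h xs} ≤
      sSup {m : ℕ | ∃ xs : List (X × Bool), xs.length = N ∧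
        Compatible (ham h) xs ∧ m = numMistakes A (ham h) xs} := by
  apply csSup_le'
  rintro m ⟨xs, hlen, hac, hm⟩
  have hcomp : Compatible (ham h) xs := by
    intro p hp
    obtain ⟨k, hk⟩ := List.mem_iff_get.mp hp
    have := hac k
    rw [← hk, this]
    by_cases hb : aap A (xs.take k.1) (xs.get k).1 = true
    · rw [if_pos hb]; exact Set.mem_insert _ _
    · rw [if_neg hb]; exact Set.mem_insert_iff.mpr (Or.inr rfl)
  have hsub : {k : ℕ | ∃ hk : k < xs.length,
      aap A (xs.take k) (xs.get ⟨k, hk⟩).1 ≠ h (xs.get ⟨k, hk⟩).1} ⊆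
      {k : ℕ | ∃ hk : k < xs.length,
      (xs.get ⟨k, hk⟩).2 ∉ A (xs.take k) (xs.get ⟨k, hk⟩).1 ∨
        ¬ A (xs.take k) (xs.get ⟨k, hk⟩).1 ⊆ ham h (xs.get ⟨k, hk⟩).1} := by
    rintro k ⟨hk, hne⟩
    refine ⟨hk, ?_⟩
    set x := (xs.get ⟨k, hk⟩).1 with hx
    have hy : (xs.get ⟨k, hk⟩).2 =
        (if aap A (xs.take k) x then h x else true) := hac ⟨k, hk⟩
    by_cases hf : false ∈ A (xs.take k) x
    · have hpred : aap A (xs.take k) x = false := by simp [aap, hf]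
      right
      intro hsubset
      have := hsubset hf
      have hhx : h x = true := by
        rw [hpred] at hne; simpa using Ne.symm hne
      simp [ham, hhx] at this
    · have hpred : aap A (xs.take k) x = true := by simp [aap, hf]
      have hhx : h x = false := by
        rw [hpred] at hne
        cases hb : h x
        · rfl
        · exact absurd hb (by simpa [hb] using hne)
      left
      rw [hy, hpred, hhx]
      simpa using hf
  have hfin : {k : ℕ | ∃ hk : k < xs.length,
      (xs.get ⟨k, hk⟩).2 ∉ A (xs.take k) (xs.get ⟨k, hk⟩).1 ∨
        ¬ A (xs.take k) (xs.get ⟨k, hk⟩).1 ⊆ ham h (xs.get ⟨k, hk⟩).1}.Finite := by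
    apply Set.Finite.subset (Set.finite_Iio xs.length)
    rintro k ⟨hk, -⟩
    exact hk
  have hle : apMistakes (aap A) h xs ≤ numMistakes A (ham h) xs :=
    Set.ncard_le_ncard hsub hfin
  have hmem : numMistakes A (ham h) xs ∈ {m : ℕ | ∃ xs : List (X × Bool),
      xs.length = N ∧ Compatible (ham h) xs ∧ m = numMistakes A (ham h) xs} :=
    ⟨xs, hlen, hcomp, rfl⟩
  have hbdd : BddAbove {m : ℕ | ∃ xs : List (X × Bool),
      xs.length = N ∧ Compatible (ham h) xs ∧ m = numMistakes A (ham h) xs} := by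
    refine ⟨N, ?_⟩
    rintro m ⟨ys, hylen, -, rfl⟩
    calc numMistakes A (ham h) ys
        ≤ (Set.Iio ys.length).ncard := by
          apply Set.ncard_le_ncard ?_ (Set.finite_Iio ys.length)
          rintro k ⟨hk, -⟩; exact hk
      _ = ys.length := by simp [Set.ncard_eq_toFinset_card']
      _ = N := hylen
  exact hm ▸ hle.trans (le_csSup hbdd hmem)
end
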